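/- arXiv:0803.3405 — 11 statements merged into one kernel-verified Lean document; each statement's English description precedes it below -/
import Mathlib

section
/- Let G be a topological group and Δ a continuous right-invariant pseudometric on G. Then the action map (x, f) ↦ x·f from G × BLip⁺(Δ) to BLip⁺(Δ) is continuous, where BLip⁺(Δ) carries the topology of pointwise convergence. -/
open Cardinal Topology

universe u

/-- `Δ` is a pseudometric: vanishes on the diagonal, symmetric, triangle inequality. -/
def IsPseudometric {G : Type u} (Δ : G → G → ℝ) : Prop :=
  (∀ x, Δ x x = 0) ∧ (∀ x y, Δ x y = Δ y x) ∧ (∀ x y z, Δ x z ≤ Δ x y + Δ y z)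

/-- Right invariance of a pseudometric on a group. -/
def RightInvariant {G : Type u} [Group G] (Δ : G → G → ℝ) : Prop :=
  ∀ z z' x, Δ (z * x) (z' * x) = Δ z z'

/-- `BLip⁺(Δ)`: [0,1]-valued functions that are 1-Lipschitz for `Δ`. -/
def BLip {G : Type u} (Δ : G → G → ℝ) : Set (G → ℝ) :=
  {f | (∀ x, 0 ≤ f x ∧ f x ≤ 1) ∧ ∀ x y, |f x - f y| ≤ Δ x y}

/-- Right translation `(x·f)(z) = f(zx)`. -/
def rtrans {G : Type u} [Group G] (x : G) (f : G → ℝ) : G → ℝ := fun z => f (z * x)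

/-- The right orbit of `f`. -/
def rorbit {G : Type u} [Group G] (f : G → ℝ) : Set (G → ℝ) := {g | ∃ x : G, g = rtrans x f}

/-- A continuous right-invariant pseudometric on a topological group. -/
def IsCRIP {G : Type u} [Group G] [TopologicalSpace G] (Δ : G → G → ℝ) : Prop :=
  IsPseudometric Δ ∧ RightInvariant Δ ∧ Continuous fun p : G × G => Δ p.1 p.2

/-- `d(Δ)`: least cardinality of a `Δ`-dense subset of `G`. -/
noncomputable def dDens {G : Type u} (Δ : G → G → ℝ) : Cardinal.{u} :=
  sInf {c | ∃ H : Set G, (∀ x : G, ∀ ε : ℝ, 0 < ε → ∃ h ∈ H, Δ x h < ε) ∧ c = Cardinal.mk H}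

/-- `η♯(Δ)`: least cardinality of `P ⊆ G` with `G = ⋃_{p ∈ P} {x | Δ(p,x) ≤ 1}`. -/
noncomputable def etaSharp {G : Type u} (Δ : G → G → ℝ) : Cardinal.{u} :=
  sInf {c | ∃ P : Set G, (∀ x : G, ∃ p ∈ P, Δ p x ≤ 1) ∧ c = Cardinal.mk P}

/-- `Δ♭(Δ)`: least cardinality of `P ⊆ G` admitting a finite `Q ⊆ G` with
`G = ⋃_{q ∈ Q} ⋃_{p ∈ P} {x | Δ(p, qx) ≤ 1}`. -/
noncomputable def deltaFlat {G : Type u} [Group G] (Δ : G → G → ℝ) : Cardinal.{u} :=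
  sInf {c | ∃ P : Set G,
    (∃ Q : Set G, Q.Finite ∧ ∀ x : G, ∃ q ∈ Q, ∃ p ∈ P, Δ p (q * x) ≤ 1) ∧
    c = Cardinal.mk P}

/-- Bounded right uniformly continuous real function on a topological group
(the right uniformity being generated by continuous right-invariant pseudometrics). -/
def BddRUC {G : Type u} [Group G] [TopologicalSpace G] (f : G → ℝ) : Prop :=
  (∃ C : ℝ, ∀ x, |f x| ≤ C) ∧
  ∀ ε : ℝ, 0 < ε → ∃ Δ : G → G → ℝ, IsCRIP Δ ∧
    ∃ δ : ℝ, 0 < δ ∧ ∀ x y, Δ x y < δ → |f x - f y| < ε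

/-- `G` is ambitable: every `BLip⁺(Δ)` is contained in the pointwise closure of the
right orbit of some bounded right uniformly continuous function. -/
def Ambitable (G : Type u) [Group G] [TopologicalSpace G] : Prop :=
  ∀ Δ : G → G → ℝ, IsCRIP Δ →
    ∃ f : G → ℝ, BddRUC f ∧ BLip Δ ⊆ closure (rorbit f)

/-- `G` is precompact: every continuous right-invariant pseudometric admits finite
`ε`-dense sets. -/
def PrecompactGrp (G : Type u) [Group G] [TopologicalSpace G] : Prop :=
  ∀ Δ : G → G → ℝ, IsCRIP Δ → ∀ ε : ℝ, 0 < ε →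
    ∃ F : Set G, F.Finite ∧ ∀ x : G, ∃ p ∈ F, Δ x p < ε

/-- `G` is `κ`-bounded: every neighbourhood `U` of the identity admits `H` with
`|H| ≤ κ` and `U * H = G`. -/
def KBounded (G : Type u) [Group G] [TopologicalSpace G] (κ : Cardinal.{u}) : Prop :=
  ∀ U ∈ nhds (1 : G), ∃ H : Set G, Cardinal.mk H ≤ κ ∧
    ∀ x : G, ∃ u ∈ U, ∃ h ∈ H, x = u * h

/-- `G` is locally `κ`-bounded: the identity has a neighbourhood `U` such that for each
continuous right-invariant pseudometric `Δ` there is a `Δ`-dense subset `H` of `U`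
with `|H| ≤ κ`. -/
def LocallyKBounded (G : Type u) [Group G] [TopologicalSpace G] (κ : Cardinal.{u}) : Prop :=
  ∃ U ∈ nhds (1 : G), ∀ Δ : G → G → ℝ, IsCRIP Δ →
    ∃ H : Set G, H ⊆ U ∧ Cardinal.mk H ≤ κ ∧
      ∀ x ∈ U, ∀ ε : ℝ, 0 < ε → ∃ h ∈ H, Δ x h < ε

/-- the action `(x, f) ↦ x·f` is continuous from `G × BLip⁺(Δ)` to
`BLip⁺(Δ)` (pointwise topology); it maps into `BLip⁺(Δ)` and is continuous. -/
theorem rtrans_action_continuous {G : Type u} [Group G] [TopologicalSpace G]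
    [IsTopologicalGroup G] (Δ : G → G → ℝ) (hΔ : IsCRIP Δ) :
    (∀ p : G × (BLip Δ), rtrans p.1 (p.2 : G → ℝ) ∈ BLip Δ) ∧
    Continuous fun p : G × (BLip Δ) => rtrans p.1 (p.2 : G → ℝ) := by
  obtain ⟨⟨hrefl, hsymm, htri⟩, hinv, hcont⟩ := hΔ
  constructor
  · rintro ⟨x, f, hf01, hflip⟩
    refine ⟨fun z => hf01 (z * x), fun z y => ?_⟩
    calc |f (z * x) - f (y * x)| ≤ Δ (z * x) (y * x) := hflip _ _
      _ = Δ z y := hinv z y x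
  · rw [continuous_pi_iff]
    intro z
    rw [continuous_iff_continuousAt]
    rintro ⟨x₀, f₀⟩
    have key : Filter.Tendsto
        (fun p : G × (BLip Δ) => Δ (z * p.1) (z * x₀) + |(p.2 : G → ℝ) (z * x₀) - (f₀ : G → ℝ) (z * x₀)|)
        (nhds (x₀, f₀)) (nhds 0) := by
      have hc : Continuous (fun p : G × (BLip Δ) =>
          Δ (z * p.1) (z * x₀) + |(p.2 : G → ℝ) (z * x₀) - (f₀ : G → ℝ) (z * x₀)|) := by
        apply Continuous.add
        · exact hcont.comp ((continuous_const.mul continuous_fst).prodMk continuous_const)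
        · exact (((continuous_apply (z * x₀)).comp
            (continuous_subtype_val.comp continuous_snd)).sub continuous_const).abs
      have := hc.continuousAt (x := (x₀, f₀))
      simpa [ContinuousAt, hrefl] using this
    have hbd : ∀ p : G × (BLip Δ),
        |(fun p : G × (BLip Δ) => rtrans p.1 (p.2 : G → ℝ) z) p
          - rtrans x₀ (f₀ : G → ℝ) z|
        ≤ Δ (z * p.1) (z * x₀) + |(p.2 : G → ℝ) (z * x₀) - (f₀ : G → ℝ) (z * x₀)| := by
      rintro ⟨x, f⟩
      have h1 : |(f : G → ℝ) (z * x) - (f : G → ℝ) (z * x₀)| ≤ Δ (z * x) (z * x₀) := f.2.2 _ _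
      calc |(f : G → ℝ) (z * x) - (f₀ : G → ℝ) (z * x₀)|
          ≤ |(f : G → ℝ) (z * x) - (f : G → ℝ) (z * x₀)|
            + |(f : G → ℝ) (z * x₀) - (f₀ : G → ℝ) (z * x₀)| := abs_sub_le _ _ _
        _ ≤ Δ (z * x) (z * x₀) + |(f : G → ℝ) (z * x₀) - (f₀ : G → ℝ) (z * x₀)| := by linarith
    have h0 : Filter.Tendsto (fun p : G × (BLip Δ) =>
        |(fun p : G × (BLip Δ) => rtrans p.1 (p.2 : G → ℝ) z) p
          - rtrans x₀ (f₀ : G → ℝ) z|) (nhds (x₀, f₀)) (nhds 0) :=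
      squeeze_zero (fun p => abs_nonneg _) hbd key
    have := (tendsto_iff_norm_sub_tendsto_zero
      (f := fun p : G × (BLip Δ) => rtrans p.1 (p.2 : G → ℝ) z)
      (a := nhds (x₀, f₀)) (b := rtrans x₀ (f₀ : G → ℝ) z)).2
    simp only [Real.norm_eq_abs] at this
    exact this h0
end

section
/- No precompact topological group is ambitable: if G is a precompact topological group, then there exists a continuous right-invariant pseudometric Δ on G such that no f in the space of bounded right uniformly continuous functions on G satisfies BLip⁺(Δ) ⊆ closure of the right orbit of f in ℝ^G. In fact, for every bounded right uniformly continuous f on G, the constant functions 0 and 1 cannot both lie in the pointwise closure of { x·f | x ∈ G }. -/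
open Cardinal Topology

universe u

/-- no precompact topological group is ambitable; in fact for every
bounded right uniformly continuous `f`, the constants `0` and `1` cannot both lie in
the pointwise orbit closure of `f`. -/
theorem precompact_not_ambitable {G : Type u} [Group G] [TopologicalSpace G]
    [IsTopologicalGroup G] (hpc : PrecompactGrp G) :
    ¬ Ambitable G ∧
    ∀ f : G → ℝ, BddRUC f →
      ¬ ((fun _ : G => (0 : ℝ)) ∈ closure (rorbit f) ∧
         (fun _ : G => (1 : ℝ)) ∈ closure (rorbit f)) := by
  have key : ∀ f : G → ℝ, BddRUC f →
      ¬ ((fun _ : G => (0 : ℝ)) ∈ closure (rorbit f) ∧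
         (fun _ : G => (1 : ℝ)) ∈ closure (rorbit f)) := by
    rintro f ⟨_, huc⟩ ⟨h0, h1⟩
    obtain ⟨Δ, hΔ, δ, hδ, hucd⟩ := huc (1/4) (by norm_num)
    obtain ⟨F, hFfin, hFdense⟩ := hpc Δ hΔ δ hδ
    -- neighbourhood of 0
    have hopen : ∀ c : ℝ, IsOpen (⋂ p ∈ F, (fun g : G → ℝ => g p) ⁻¹' Metric.ball c (1/4)) := by
      intro c
      exact hFfin.isOpen_biInter fun p _ =>
        (Metric.isOpen_ball).preimage (continuous_apply p)
    have hmem0 : (fun _ : G => (0 : ℝ)) ∈ ⋂ p ∈ F, (fun g : G → ℝ => g p) ⁻¹' Metric.ball 0 (1/4) := by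
      simp only [Set.mem_iInter, Set.mem_preimage, Metric.mem_ball, dist_self]
      intro p _; norm_num
    have hmem1 : (fun _ : G => (1 : ℝ)) ∈ ⋂ p ∈ F, (fun g : G → ℝ => g p) ⁻¹' Metric.ball 1 (1/4) := by
      simp only [Set.mem_iInter, Set.mem_preimage, Metric.mem_ball, dist_self]
      intro p _; norm_num
    obtain ⟨g0, hg0U, x, rfl⟩ := mem_closure_iff.mp h0 _ (hopen 0) hmem0
    obtain ⟨g1, hg1U, y, rfl⟩ := mem_closure_iff.mp h1 _ (hopen 1) hmem1
    simp only [Set.mem_iInter, Set.mem_preimage, Metric.mem_ball, rtrans,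
      Real.dist_eq] at hg0U hg1U
    -- for all w, |f (w*x)| < 1/2 and f (w*y) > 1/2
    have hx : ∀ w : G, |f (w * x)| < 1/2 := by
      intro w
      obtain ⟨p, hpF, hpd⟩ := hFdense w
      have h1 : Δ (w * x) (p * x) < δ := by
        rw [hΔ.2.1 w p x]; exact hpd
      have h2 := hucd _ _ h1
      have h3 := hg0U p hpF
      calc |f (w * x)| = |(f (w * x) - f (p * x)) + (f (p * x) - 0)| := by ring_nf
        _ ≤ |f (w * x) - f (p * x)| + |f (p * x) - 0| := abs_add_le _ _
        _ < 1/4 + 1/4 := add_lt_add h2 h3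
        _ = 1/2 := by norm_num
    have hy : ∀ w : G, (1:ℝ)/2 < f (w * y) := by
      intro w
      obtain ⟨p, hpF, hpd⟩ := hFdense w
      have h1 : Δ (w * y) (p * y) < δ := by
        rw [hΔ.2.1 w p y]; exact hpd
      have h2 := hucd _ _ h1
      have h3 := hg1U p hpF
      have h4 : |f (w * y) - 1| < 1/2 := by
        calc |f (w * y) - 1| = |(f (w * y) - f (p * y)) + (f (p * y) - 1)| := by ring_nf
          _ ≤ |f (w * y) - f (p * y)| + |f (p * y) - 1| := abs_add_le _ _
          _ < 1/4 + 1/4 := add_lt_add h2 h3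
          _ = 1/2 := by norm_num
      have := (abs_lt.mp h4).1
      linarith
    have hA := hx 1
    have hB := hy (x * y⁻¹)
    rw [inv_mul_cancel_right] at hB
    rw [one_mul] at hA
    have := (abs_lt.mp hA).2
    linarith
  refine ⟨?_, key⟩
  intro hA
  obtain ⟨f, hf, hsub⟩ := hA (fun _ _ => 0)
    ⟨⟨fun _ => rfl, fun _ _ => rfl, fun _ _ _ => by norm_num⟩,
     fun _ _ _ => rfl, continuous_const⟩
  have h0 : (fun _ : G => (0:ℝ)) ∈ BLip (fun _ _ => (0:ℝ)) :=
    ⟨fun x => ⟨le_refl 0, zero_le_one⟩, fun x y => by simp⟩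
  have h1 : (fun _ : G => (1:ℝ)) ∈ BLip (fun _ _ => (0:ℝ)) :=
    ⟨fun x => ⟨zero_le_one, le_refl 1⟩, fun x y => by simp⟩
  exact key f hf ⟨hsub h0, hsub h1⟩
end

section
/- For any pseudometric Δ on a group G, d(Δ) = lim_{k→∞} η♯(kΔ), i.e., the cardinals η♯(kΔ) form a nondecreasing sequence in k whose supremum equals the Δ-density d(Δ) (when d(Δ) is infinite; if d(Δ) is finite the sequence is eventually equal to it). -/
open Cardinal Topology

universe u

lemma pm_nonneg' {G : Type u} {Δ : G → G → ℝ} (hΔ : IsPseudometric Δ) (x y : G) : 0 ≤ Δ x y := by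
  have h := hΔ.2.2 x y x
  rw [hΔ.1 x, hΔ.2.1 y x] at h
  linarith

lemma dDens_le_of_covers' {G : Type u} {Δ : G → G → ℝ} (hΔ : IsPseudometric Δ) (n : ℕ)
    (h : ∀ k : ℕ, ∃ P : Set G,
      (∀ x : G, ∃ p ∈ P, ((k : ℝ) + 1) * Δ p x ≤ 1) ∧ Cardinal.mk P ≤ n) :
    dDens Δ ≤ n := by
  classical
  set 𝒮 : Set (Finset G) := {F | ∀ x ∈ F, ∀ y ∈ F, x ≠ y → 0 < Δ x y} with h𝒮
  have hcard : ∀ F ∈ 𝒮, F.card ≤ n := by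
    intro F hF
    by_contra hc
    push_neg at hc
    have hFne : F.Nonempty := Finset.card_pos.mp (lt_of_le_of_lt (Nat.zero_le n) hc)
    by_cases hn : n = 0
    · obtain ⟨P, hPcov, hPcard⟩ := h 0
      obtain ⟨x, _⟩ := hFne
      obtain ⟨p, hp, _⟩ := hPcov x
      have hz : Cardinal.mk P = 0 := le_antisymm (by simpa [hn] using hPcard) zero_le
      rw [Cardinal.mk_eq_zero_iff] at hz
      exact hz.elim ⟨p, hp⟩
    · have h2 : 2 ≤ F.card := by omega
      set T : Finset ℝ := ((F ×ˢ F).filter fun q => q.1 ≠ q.2).image fun q => Δ q.1 q.2 with hT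
      have hTne : T.Nonempty := by
        obtain ⟨x, hx, y, hy, hxy⟩ := Finset.one_lt_card.mp h2
        exact ⟨Δ x y, Finset.mem_image.mpr ⟨(x, y),
          Finset.mem_filter.mpr ⟨Finset.mem_product.mpr ⟨hx, hy⟩, hxy⟩, rfl⟩⟩
      set δ := T.min' hTne with hδ
      have hδpos : 0 < δ := by
        have hm := T.min'_mem hTne
        obtain ⟨q, hq, hqe⟩ := Finset.mem_image.mp hm
        obtain ⟨hq1, hq2⟩ := Finset.mem_filter.mp hq
        obtain ⟨ha, hb⟩ := Finset.mem_product.mp hq1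
        rw [hδ, ← hqe]
        exact hF _ ha _ hb hq2
      obtain ⟨k, hk⟩ := exists_nat_gt (2 / δ)
      obtain ⟨P, hPcov, hPcard⟩ := h k
      choose p hpP hple using hPcov
      have hninj : ¬ Function.Injective (fun x : ↥F => (⟨p x, hpP x⟩ : ↥P)) := by
        intro hinj
        have h1 := Cardinal.mk_le_of_injective hinj
        have h2 : Cardinal.mk ↥F = F.card := by simp
        have h3 : (F.card : Cardinal) ≤ n := h2 ▸ h1.trans hPcard
        have := Nat.cast_le.mp h3
        omega
      rw [Function.not_injective_iff] at hninj
      obtain ⟨a, b, hab, hne⟩ := hninj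
      have hpab : p (a : G) = p (b : G) := congrArg Subtype.val hab
      have habne : (a : G) ≠ (b : G) := fun he => hne (Subtype.ext he)
      have hδle : δ ≤ Δ (a : G) (b : G) := T.min'_le _ (Finset.mem_image.mpr
        ⟨((a : G), (b : G)), Finset.mem_filter.mpr
          ⟨Finset.mem_product.mpr ⟨a.2, b.2⟩, habne⟩, rfl⟩)
      have h1 := hple (a : G)
      have h2 := hple (b : G)
      rw [hpab] at h1
      have htri : Δ (a : G) (b : G) ≤ Δ (p (b : G)) (a : G) + Δ (p (b : G)) (b : G) := by
        have := hΔ.2.2 (a : G) (p (b : G)) (b : G)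
        rw [hΔ.2.1 (a : G) (p (b : G))] at this
        exact this
      have hkpos : (0 : ℝ) < (k : ℝ) + 1 := by positivity
      have hkd : 2 < ((k : ℝ)) * δ := (div_lt_iff₀ hδpos).mp hk
      nlinarith [pm_nonneg' hΔ (p (b : G)) (a : G), pm_nonneg' hΔ (p (b : G)) (b : G)]
  have hSne : 𝒮.Nonempty := ⟨∅, by intro x hx; simp at hx⟩
  obtain ⟨F, hF, hmax⟩ : ∃ F ∈ 𝒮, ∀ F' ∈ 𝒮, F'.card ≤ F.card := by
    have hbdd : BddAbove (Finset.card '' 𝒮) := ⟨n, by rintro _ ⟨F, hF, rfl⟩; exact hcard F hF⟩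
    obtain ⟨F, hF, hFcard⟩ := Nat.sSup_mem (hSne.image _) hbdd
    exact ⟨F, hF, fun F' hF' => hFcard ▸ le_csSup hbdd ⟨F', hF', rfl⟩⟩
  have hdense : ∀ x : G, ∃ h ∈ F, Δ x h = 0 := by
    intro x
    by_contra hcon
    push_neg at hcon
    have hxF : x ∉ F := fun hx => hcon x hx (hΔ.1 x)
    have hins : insert x F ∈ 𝒮 := by
      intro a ha b hb hab
      simp only [Finset.mem_insert] at ha hb
      rcases ha with rfl | ha
      · rcases hb with rfl | hb
        · exact absurd rfl hab
        · exact lt_of_le_of_ne (pm_nonneg' hΔ _ _) (Ne.symm (hcon b hb))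
      · rcases hb with rfl | hb
        · rw [hΔ.2.1]
          exact lt_of_le_of_ne (pm_nonneg' hΔ _ _) (Ne.symm (hcon a ha))
        · exact hF a ha b hb hab
    have := hmax _ hins
    rw [Finset.card_insert_of_notMem hxF] at this
    omega
  have hdd : dDens Δ ≤ Cardinal.mk ↥(↑F : Set G) := by
    apply csInf_le'
    refine ⟨↑F, fun x ε hε => ?_, rfl⟩
    obtain ⟨h, hh, h0⟩ := hdense x
    exact ⟨h, Finset.mem_coe.mpr hh, by rw [h0]; exact hε⟩
  have hfc : Cardinal.mk ↥(↑F : Set G) = F.card := by simp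
  rw [hfc] at hdd
  exact hdd.trans (Nat.cast_le.mpr (hcard F hF))

/-- `d(Δ) = lim_k η♯(kΔ)`: the sequence `η♯(kΔ)` is nondecreasing;
if `d(Δ)` is infinite it equals the supremum, and if `d(Δ)` is finite the sequence is
eventually equal to it. -/
theorem dDens_eq_limit_etaSharp {G : Type u} [Group G] (Δ : G → G → ℝ)
    (hΔ : IsPseudometric Δ) :
    (∀ j k : ℕ, j ≤ k →
      etaSharp (fun x y => ((j : ℝ) + 1) * Δ x y) ≤
        etaSharp (fun x y => ((k : ℝ) + 1) * Δ x y)) ∧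
    (Cardinal.aleph0 ≤ dDens Δ →
      dDens Δ = ⨆ k : ℕ, etaSharp (fun x y => ((k : ℝ) + 1) * Δ x y)) ∧
    (dDens Δ < Cardinal.aleph0 →
      ∃ K : ℕ, ∀ k : ℕ, K ≤ k →
        etaSharp (fun x y => ((k : ℝ) + 1) * Δ x y) = dDens Δ) := by
  classical
  have nn := pm_nonneg' hΔ
  have hattain : ∀ k : ℕ, ∃ P : Set G,
      (∀ x : G, ∃ p ∈ P, ((k : ℝ) + 1) * Δ p x ≤ 1) ∧
      etaSharp (fun x y => ((k : ℝ) + 1) * Δ x y) = Cardinal.mk P := by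
    intro k
    have hne : {c | ∃ P : Set G,
        (∀ x : G, ∃ p ∈ P, ((k : ℝ) + 1) * Δ p x ≤ 1) ∧ c = Cardinal.mk P}.Nonempty :=
      ⟨_, Set.univ, fun x => ⟨x, Set.mem_univ x, by simp [hΔ.1 x]⟩, rfl⟩
    obtain ⟨P, hP, hc⟩ := csInf_mem hne
    exact ⟨P, hP, hc⟩
  choose P hPcov hPeq using hattain
  -- monotonicity
  have hmono : ∀ j k : ℕ, j ≤ k →
      etaSharp (fun x y => ((j : ℝ) + 1) * Δ x y) ≤
        etaSharp (fun x y => ((k : ℝ) + 1) * Δ x y) := by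
    intro j k hjk
    rw [hPeq k]
    apply csInf_le'
    refine ⟨P k, fun x => ?_, rfl⟩
    obtain ⟨p, hp, hple⟩ := hPcov k x
    refine ⟨p, hp, le_trans ?_ hple⟩
    have hjk' : ((j : ℝ) + 1) ≤ (k : ℝ) + 1 := add_le_add_left (Nat.cast_le.mpr hjk) 1
    exact mul_le_mul_of_nonneg_right hjk' (nn p x)
  -- a dense witness attaining dDens
  have hdne : {c | ∃ H : Set G,
      (∀ x : G, ∀ ε : ℝ, 0 < ε → ∃ h ∈ H, Δ x h < ε) ∧ c = Cardinal.mk H}.Nonempty :=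
    ⟨_, Set.univ, fun x ε hε => ⟨x, Set.mem_univ x, by rw [hΔ.1]; exact hε⟩, rfl⟩
  obtain ⟨H, hHd, hHc⟩ := csInf_mem hdne
  have hHc' : dDens Δ = Cardinal.mk H := hHc
  have hle : ∀ k : ℕ, etaSharp (fun x y => ((k : ℝ) + 1) * Δ x y) ≤ dDens Δ := by
    intro k
    rw [hHc']
    apply csInf_le'
    refine ⟨H, fun x => ?_, rfl⟩
    have hkpos : (0 : ℝ) < (k : ℝ) + 1 := by positivity
    obtain ⟨h, hh, hlt⟩ := hHd x (1 / ((k : ℝ) + 1)) (by positivity)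
    refine ⟨h, hh, ?_⟩
    have h1 : ((k : ℝ) + 1) * Δ x h < ((k : ℝ) + 1) * (1 / ((k : ℝ) + 1)) :=
      mul_lt_mul_of_pos_left hlt hkpos
    rw [mul_one_div_cancel (ne_of_gt hkpos)] at h1
    show ((k : ℝ) + 1) * Δ h x ≤ 1
    rw [hΔ.2.1 h x]
    exact le_of_lt h1
  refine ⟨hmono, ?_, ?_⟩
  · -- infinite case
    intro hdd
    refine le_antisymm ?_ (ciSup_le' fun k => hle k)
    by_cases hsa : Cardinal.aleph0 ≤ ⨆ k : ℕ, etaSharp (fun x y => ((k : ℝ) + 1) * Δ x y)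
    · have hsup : ⨆ k : ℕ, Cardinal.mk ↥(P k)
          = ⨆ k : ℕ, etaSharp (fun x y => ((k : ℝ) + 1) * Δ x y) :=
        iSup_congr fun k => (hPeq k).symm
      have hdle : dDens Δ ≤ Cardinal.mk ↥(⋃ k, P k) := by
        apply csInf_le'
        refine ⟨⋃ k, P k, fun x ε hε => ?_, rfl⟩
        obtain ⟨k, hk⟩ := exists_nat_gt (1 / ε)
        obtain ⟨p, hp, hple⟩ := hPcov k x
        refine ⟨p, Set.mem_iUnion.mpr ⟨k, hp⟩, ?_⟩
        have hkpos : (0 : ℝ) < (k : ℝ) + 1 := by positivity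
        rw [hΔ.2.1 x p]
        have h1 : Δ p x ≤ 1 / ((k : ℝ) + 1) := by
          rw [le_div_iff₀ hkpos, mul_comm]; exact hple
        have h2 : 1 / ((k : ℝ) + 1) < ε := by
          rw [div_lt_iff₀ hkpos]
          rw [div_lt_iff₀ hε] at hk
          nlinarith
        linarith
      have hUle : Cardinal.mk ↥(⋃ k, P k) ≤
          Cardinal.aleph0 * ⨆ k : ℕ, Cardinal.mk ↥(P k) := by
        have hiu := Cardinal.mk_iUnion_le (fun i : ULift.{u} ℕ => P i.down)
        have he : (⋃ k, P k) = ⋃ i : ULift.{u} ℕ, P i.down := by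
          ext x; simp only [Set.mem_iUnion]
          exact ⟨fun ⟨i, h⟩ => ⟨⟨i⟩, h⟩, fun ⟨i, h⟩ => ⟨i.down, h⟩⟩
        rw [he]
        refine hiu.trans ?_
        have h1 : Cardinal.mk (ULift.{u} ℕ) = Cardinal.aleph0 := by simp
        have h2 : ⨆ i : ULift.{u} ℕ, Cardinal.mk ↥(P i.down)
            = ⨆ k : ℕ, Cardinal.mk ↥(P k) := by
          apply le_antisymm
          · exact ciSup_le' fun i => le_ciSup (Cardinal.bddAbove_range _) i.down
          · exact ciSup_le' fun i => le_ciSup (Cardinal.bddAbove_range _) (ULift.up i)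
        rw [h1, h2]
      rw [hsup] at hUle
      refine hdle.trans (hUle.trans ?_)
      rw [Cardinal.mul_eq_max le_rfl hsa]
      exact le_of_eq (max_eq_right hsa)
    · exfalso
      push_neg at hsa
      obtain ⟨m, hm⟩ := Cardinal.lt_aleph0.mp hsa
      have hdm : dDens Δ ≤ m := by
        apply dDens_le_of_covers' hΔ m
        intro k
        refine ⟨P k, hPcov k, ?_⟩
        rw [← hPeq k, ← hm]
        exact le_ciSup (Cardinal.bddAbove_range _) k
      exact (Cardinal.nat_lt_aleph0 m).not_ge (hdd.trans hdm)
  · -- finite case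
    intro hfin
    obtain ⟨n, hn⟩ := Cardinal.lt_aleph0.mp hfin
    have hub : ∀ k : ℕ, etaSharp (fun x y => ((k : ℝ) + 1) * Δ x y) ≤ (n : Cardinal) :=
      fun k => hn ▸ hle k
    have hex : ∃ K : ℕ, etaSharp (fun x y => ((K : ℝ) + 1) * Δ x y) = (n : Cardinal) := by
      by_contra hcon
      push_neg at hcon
      have hnpos : n ≠ 0 := by
        rintro rfl
        exact hcon 0 (le_antisymm (by simpa using hub 0) zero_le)
      have hub' : ∀ k : ℕ, etaSharp (fun x y => ((k : ℝ) + 1) * Δ x y)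
          ≤ ((n - 1 : ℕ) : Cardinal) := by
        intro k
        obtain ⟨m, hm⟩ := Cardinal.lt_aleph0.mp
          (lt_of_le_of_lt (hub k) (Cardinal.nat_lt_aleph0 n))
        have hmn : m < n := by
          have h1 := hub k
          rw [hm] at h1
          have h2 := Nat.cast_le.mp h1
          rcases lt_or_eq_of_le h2 with h | h
          · exact h
          · exact absurd (by rw [hm, h]) (hcon k)
        rw [hm]
        exact Nat.cast_le.mpr (by omega)
      have hd := dDens_le_of_covers' hΔ (n - 1) fun k =>
        ⟨P k, hPcov k, by rw [← hPeq k]; exact hub' k⟩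
      rw [hn] at hd
      have := Nat.cast_le.mp hd
      omega
    obtain ⟨K, hK⟩ := hex
    refine ⟨K, fun k hk => ?_⟩
    have h2 : (n : Cardinal) ≤ etaSharp (fun x y => ((k : ℝ) + 1) * Δ x y) :=
      hK ▸ hmono K k hk
    rw [hn]
    exact le_antisymm (hub k) h2
end

section
/- Let G be a group, P ⊆ G, and A₁, …, A_n ⊆ G with G = ⋃_{k=1}^n A_k P. Then there exist a set P' ⊆ G and an index j (1 ≤ j ≤ n) such that G = A_j⁻¹ A_j P', where P' is finite if P is finite, and |P'| ≤ |P| if P is infinite. -/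
open Cardinal Topology

universe u

theorem infinite_aleph0_le_mk {G : Type u} {Q : Set G} (hQ : Q.Infinite) :
    Cardinal.aleph0 ≤ Cardinal.mk Q := by
  have := hQ.to_subtype; exact Cardinal.aleph0_le_mk _

open Pointwise in
theorem partition_aux {G : Type u} [Group G] :
    ∀ n : ℕ, ∀ A : Fin n → Set G, ∀ Q : Set G,
      (∀ x : G, ∃ k : Fin n, ∃ a ∈ A k, ∃ p ∈ Q, x = a * p) →
      ∃ P' : Set G, ∃ j : Fin n,
        (∀ x : G, ∃ a ∈ A j, ∃ a' ∈ A j, ∃ p ∈ P', x = a⁻¹ * a' * p) ∧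
        (Q.Finite → P'.Finite) ∧ (Q.Infinite → Cardinal.mk P' ≤ Cardinal.mk Q) := by
  intro n
  induction n with
  | zero =>
    intro A Q hcov
    obtain ⟨k, -⟩ := hcov 1
    exact absurd k.2 (by omega)
  | succ n ih =>
    intro A Q hcov
    by_cases hC : ∃ F : Set G, (Q.Finite → F.Finite) ∧
        (Q.Infinite → Cardinal.mk F ≤ Cardinal.mk Q) ∧
        ∀ x : G, ∃ k : Fin n, ∃ a ∈ A k.castSucc, ∃ p ∈ Q * F, x = a * p
    · obtain ⟨F, hF1, hF2, hFcov⟩ := hC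
      obtain ⟨P', j, hj, h1, h2⟩ := ih (fun k => A k.castSucc) (Q * F) hFcov
      refine ⟨P', j.castSucc, hj, fun hQ => h1 (hQ.mul (hF1 hQ)), fun hQ => ?_⟩
      by_cases hQF : (Q * F).Finite
      · exact le_trans (le_of_lt (h1 hQF).lt_aleph0) (infinite_aleph0_le_mk hQ)
      · calc Cardinal.mk P' ≤ Cardinal.mk (Q * F : Set G) := h2 hQF
          _ ≤ Cardinal.mk Q * Cardinal.mk F := Cardinal.mk_mul_le
          _ ≤ Cardinal.mk Q * Cardinal.mk Q :=
              mul_le_mul_right (hF2 hQ) _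
          _ = Cardinal.mk Q := Cardinal.mul_eq_self (infinite_aleph0_le_mk hQ)
    · push_neg at hC
      refine ⟨Q, Fin.last n, fun x => ?_, fun h => h, fun _ => le_rfl⟩
      set F : Set G := ((fun p => x⁻¹ * p) '' Q) ∪ {1} with hFdef
      have hF1 : Q.Finite → F.Finite := fun hQ =>
        (hQ.image _).union (Set.finite_singleton 1)
      have hF2 : Q.Infinite → Cardinal.mk F ≤ Cardinal.mk Q := by
        intro hQ
        calc Cardinal.mk F ≤ Cardinal.mk ((fun p => x⁻¹ * p) '' Q)
              + Cardinal.mk ({1} : Set G) := Cardinal.mk_union_le _ _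
          _ ≤ Cardinal.mk Q + Cardinal.mk Q := by
              refine add_le_add Cardinal.mk_image_le ?_
              simpa using le_trans Cardinal.one_le_aleph0 (infinite_aleph0_le_mk hQ)
          _ = Cardinal.mk Q := Cardinal.add_eq_self (infinite_aleph0_le_mk hQ)
      obtain ⟨y, hy⟩ := hC F hF1 hF2
      have h1F : (1 : G) ∈ F := Set.mem_union_right _ rfl
      obtain ⟨k', a₁, ha₁, p₁, hp₁, hy'⟩ := hcov y
      rcases Fin.eq_castSucc_or_eq_last k' with ⟨k, rfl⟩ | rfl
      · exact absurd (by simpa using hy') (hy k a₁ ha₁ (p₁ * 1) (Set.mul_mem_mul hp₁ h1F))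
      · obtain ⟨k'', a₂, ha₂, p₂, hp₂, hz⟩ := hcov (a₁ * x)
        rcases Fin.eq_castSucc_or_eq_last k'' with ⟨k, rfl⟩ | rfl
        · have hmem : p₂ * (x⁻¹ * p₁) ∈ Q * F :=
            Set.mul_mem_mul hp₂ (Set.mem_union_left _ ⟨p₁, hp₁, rfl⟩)
          have ha1eq : a₁ = a₂ * p₂ * x⁻¹ := by
            rw [← hz]; group
          have : y = a₂ * (p₂ * (x⁻¹ * p₁)) := by
            rw [hy', ha1eq]; group
          exact absurd this (hy k a₂ ha₂ _ hmem)
        · exact ⟨a₁, ha₁, a₂, ha₂, p₂, hp₂, by rw [mul_assoc, ← hz, inv_mul_cancel_left]⟩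

/-- if `G = ⋃_{k=1}^n A_k P` then `G = A_j⁻¹ A_j P'` for some `j` and some
`P'` which is finite if `P` is, and of cardinality at most `|P|` if `P` is infinite. -/
theorem partition_lemma {G : Type u} [Group G] (P : Set G) (n : ℕ)
    (A : Fin n → Set G)
    (hcov : ∀ x : G, ∃ k : Fin n, ∃ a ∈ A k, ∃ p ∈ P, x = a * p) :
    ∃ P' : Set G, ∃ j : Fin n,
      (∀ x : G, ∃ a ∈ A j, ∃ a' ∈ A j, ∃ p ∈ P', x = a⁻¹ * a' * p) ∧
      (P.Finite → P'.Finite) ∧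
      (P.Infinite → Cardinal.mk P' ≤ Cardinal.mk P) := by
  exact partition_aux n A P hcov
end

section
/- Let G be a topological group and Δ a continuous right-invariant pseudometric on G. If Δ♭(Δ) is finite then η♯(½Δ) is finite, and if Δ♭(Δ) is infinite then η♯(½Δ) ≤ Δ♭(Δ). -/
open Cardinal Topology

universe u

private lemma mk_image2_le' {α : Type u} (f : α → α → α) (s t : Set α) :
    Cardinal.mk (Set.image2 f s t) ≤ Cardinal.mk s * Cardinal.mk t := by
  rw [← Set.image_prod]
  refine le_trans Cardinal.mk_image_le ?_
  have h : Cardinal.mk ↥(s ×ˢ t) = Cardinal.mk s * Cardinal.mk t := by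
    rw [Cardinal.mk_congr (Equiv.Set.prod s t), Cardinal.mk_prod,
      Cardinal.lift_id, Cardinal.lift_id]
  exact h.le

private lemma key_lemma {G : Type u} [Group G] (Δ : G → G → ℝ)
    (hpm : IsPseudometric Δ) (hri : RightInvariant Δ) (μ : Cardinal.{u})
    (hμ : Cardinal.aleph0 ≤ μ) :
    ∀ (n : ℕ) (Q : Finset G) (T : G → Set G), Q.card ≤ n →
      (∀ q, Cardinal.mk (T q) ≤ μ) →
      (∀ x : G, ∃ q ∈ Q, ∃ t ∈ T q, Δ t (q * x) ≤ 1) →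
      ∃ P' : Set G, (∀ x : G, ∃ c ∈ P', Δ c x ≤ 2) ∧ Cardinal.mk P' ≤ μ ∧
        ((∀ q, (T q).Finite) → P'.Finite) := by
  classical
  intro n
  induction n with
  | zero =>
      intro Q T hcard _ hcov
      exfalso
      obtain ⟨q, hq, -⟩ := hcov 1
      rw [Finset.card_eq_zero.mp (Nat.le_zero.mp hcard)] at hq
      exact absurd hq (Finset.notMem_empty q)
  | succ n ih =>
      intro Q T hcard hT hcov
      obtain ⟨q₀, hq₀⟩ : Q.Nonempty := by
        rcases hcov 1 with ⟨q, hq, -⟩; exact ⟨q, hq⟩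
      by_cases hnet : ∀ g : G, ∃ t ∈ T q₀, Δ t g ≤ 2
      · exact ⟨T q₀, hnet, hT q₀, fun h => h q₀⟩
      · push_neg at hnet
        obtain ⟨g₀, hg₀⟩ := hnet
        set T' : G → Set G := fun q =>
          T q ∪ Set.image2 (fun s t => s * (g₀⁻¹ * t)) (T q) (T q₀) with hT'def
        have hcard' : (Q.erase q₀).card ≤ n := by
          have := Finset.card_erase_of_mem hq₀; omega
        have hT'card : ∀ q, Cardinal.mk (T' q) ≤ μ := by
          intro q
          refine le_trans (Cardinal.mk_union_le _ _) ?_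
          have h2 := (mk_image2_le' (fun s t => s * (g₀⁻¹ * t)) (T q) (T q₀)).trans
            (mul_le_mul' (hT q) (hT q₀))
          calc Cardinal.mk (T q) + Cardinal.mk (Set.image2 (fun s t => s * (g₀⁻¹ * t)) (T q) (T q₀))
              ≤ μ + μ * μ := add_le_add (hT q) h2
            _ = μ + μ := by rw [Cardinal.mul_eq_self hμ]
            _ = μ := Cardinal.add_eq_self hμ
        have hcov' : ∀ x : G, ∃ q ∈ Q.erase q₀, ∃ t ∈ T' q, Δ t (q * x) ≤ 1 := by
          intro x
          obtain ⟨q, hq, t, ht, hle⟩ := hcov x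
          by_cases hqq : q = q₀
          · subst hqq
            set y := x * (t⁻¹ * g₀) with hy
            have h1 : Δ g₀ (q * y) ≤ 1 := by
              have hinv := hri t (q * x) (t⁻¹ * g₀)
              have e1 : t * (t⁻¹ * g₀) = g₀ := by group
              have e2 : (q * x) * (t⁻¹ * g₀) = q * y := by rw [hy]; group
              rw [e1, e2] at hinv
              rw [hinv]; exact hle
            obtain ⟨q₁, hq₁, t₁, ht₁, h2⟩ := hcov y
            have hq₁ne : q₁ ≠ q := by
              intro hEq
              rw [hEq] at ht₁ h2
              have htri := hpm.2.2 t₁ (q * y) g₀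
              have hsym : Δ (q * y) g₀ = Δ g₀ (q * y) := hpm.2.1 _ _
              have hfar := hg₀ t₁ ht₁
              linarith
            refine ⟨q₁, Finset.mem_erase.mpr ⟨hq₁ne, hq₁⟩, t₁ * (g₀⁻¹ * t), ?_, ?_⟩
            · exact Or.inr (Set.mem_image2_of_mem ht₁ ht)
            · have hinv := hri t₁ (q₁ * y) (g₀⁻¹ * t)
              have e3 : (q₁ * y) * (g₀⁻¹ * t) = q₁ * x := by rw [hy]; group
              rw [e3] at hinv
              rw [hinv]; exact h2
          · exact ⟨q, Finset.mem_erase.mpr ⟨hqq, hq⟩, t, Or.inl ht, hle⟩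
        obtain ⟨P', h1, h2, h3⟩ := ih (Q.erase q₀) T' hcard' hT'card hcov'
        refine ⟨P', h1, h2, fun hf => h3 ?_⟩
        intro q
        exact Set.Finite.union (hf q) (Set.Finite.image2 _ (hf q) (hf q₀))

/-- if `Δ♭(Δ)` is finite then `η♯(½Δ)` is finite; if `Δ♭(Δ)` is infinite
then `η♯(½Δ) ≤ Δ♭(Δ)`. -/
theorem etaSharp_half_le_deltaFlat {G : Type u} [Group G] [TopologicalSpace G]
    [IsTopologicalGroup G] (Δ : G → G → ℝ) (hΔ : IsCRIP Δ) :
    (deltaFlat Δ < Cardinal.aleph0 →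
      etaSharp (fun x y => Δ x y / 2) < Cardinal.aleph0) ∧
    (Cardinal.aleph0 ≤ deltaFlat Δ →
      etaSharp (fun x y => Δ x y / 2) ≤ deltaFlat Δ) := by
  obtain ⟨hpm, hri, -⟩ := hΔ
  have hne : {c | ∃ P : Set G,
      (∃ Q : Set G, Q.Finite ∧ ∀ x : G, ∃ q ∈ Q, ∃ p ∈ P, Δ p (q * x) ≤ 1) ∧
      c = Cardinal.mk P}.Nonempty := by
    refine ⟨Cardinal.mk (Set.univ : Set G), Set.univ,
      ⟨{(1 : G)}, Set.finite_singleton _, fun x => ⟨1, rfl, x, Set.mem_univ x, ?_⟩⟩, rfl⟩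
    rw [one_mul, hpm.1 x]
    exact zero_le_one
  have hmem : deltaFlat Δ ∈ {c | ∃ P : Set G,
      (∃ Q : Set G, Q.Finite ∧ ∀ x : G, ∃ q ∈ Q, ∃ p ∈ P, Δ p (q * x) ≤ 1) ∧
      c = Cardinal.mk P} := csInf_mem hne
  obtain ⟨P, ⟨Q, hQfin, hQcov⟩, hPeq⟩ := hmem
  have hcovF : ∀ x : G, ∃ q ∈ hQfin.toFinset, ∃ t ∈ (fun _ : G => P) q, Δ t (q * x) ≤ 1 := by
    intro x
    obtain ⟨q, hq, p, hp, h⟩ := hQcov x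
    exact ⟨q, hQfin.mem_toFinset.mpr hq, p, hp, h⟩
  constructor
  · intro hlt
    rw [hPeq] at hlt
    have hPfin : P.Finite := Cardinal.lt_aleph0_iff_set_finite.mp hlt
    obtain ⟨P', hcov2, -, hfin⟩ := key_lemma Δ hpm hri Cardinal.aleph0 le_rfl
      hQfin.toFinset.card hQfin.toFinset (fun _ => P) le_rfl (fun _ => hlt.le) hcovF
    have hP'fin : P'.Finite := hfin (fun _ => hPfin)
    have hmem2 : Cardinal.mk P' ∈ {c | ∃ Pa : Set G,
        (∀ x : G, ∃ p ∈ Pa, (fun x y => Δ x y / 2) p x ≤ 1) ∧ c = Cardinal.mk Pa} := by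
      refine ⟨P', fun x => ?_, rfl⟩
      obtain ⟨c, hc, h⟩ := hcov2 x
      exact ⟨c, hc, by dsimp; linarith⟩
    calc etaSharp (fun x y => Δ x y / 2) ≤ Cardinal.mk P' :=
          csInf_le (OrderBot.bddBelow _) hmem2
      _ < Cardinal.aleph0 := Cardinal.lt_aleph0_iff_set_finite.mpr hP'fin
  · intro hge
    rw [hPeq] at hge
    obtain ⟨P', hcov2, hle, -⟩ := key_lemma Δ hpm hri (Cardinal.mk P) hge
      hQfin.toFinset.card hQfin.toFinset (fun _ => P) le_rfl (fun _ => le_rfl) hcovF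
    have hmem2 : Cardinal.mk P' ∈ {c | ∃ Pa : Set G,
        (∀ x : G, ∃ p ∈ Pa, (fun x y => Δ x y / 2) p x ≤ 1) ∧ c = Cardinal.mk Pa} := by
      refine ⟨P', fun x => ?_, rfl⟩
      obtain ⟨c, hc, h⟩ := hcov2 x
      exact ⟨c, hc, by dsimp; linarith⟩
    rw [hPeq]
    exact le_trans (csInf_le (OrderBot.bddBelow _) hmem2) hle
end

section
/- Let G be a topological group and Δ a continuous right-invariant pseudometric on G with d(Δ) > ℵ₀. Then d(Δ) = lim_{k→∞} Δ♭(kΔ), i.e., d(Δ) is the supremum of the nondecreasing sequence of cardinals Δ♭(kΔ). -/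
open Cardinal Topology

universe u

section AuxProofs

open Set

variable {G : Type u} [Group G]

private lemma card_sInf_mem {s : Set Cardinal.{u}} (hs : s.Nonempty) : sInf s ∈ s := by
  obtain ⟨m, hm, hmin⟩ := Cardinal.lt_wf.has_min s hs
  have : sInf s = m := le_antisymm (csInf_le' hm)
    (le_csInf hs fun b hb => not_lt.mp (hmin b hb))
  rw [this]; exact hm

private lemma pseudo_nonneg {Δ : G → G → ℝ} (h0 : ∀ x : G, Δ x x = 0)
    (hsymm : ∀ x y : G, Δ x y = Δ y x)
    (htri : ∀ x y z : G, Δ x z ≤ Δ x y + Δ y z) (x y : G) : 0 ≤ Δ x y := by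
  have h := htri x y x
  rw [h0 x, hsymm y x] at h
  linarith

/-- The key combinatorial (B.H. Neumann style) lemma: from a covering of `G` by finitely
many left translates of `ε`-neighbourhoods of a set `P`, extract a `2ε`-net of
cardinality at most `max |P| ℵ₀`. -/
private lemma neumann (Δ : G → G → ℝ)
    (hsymm : ∀ x y : G, Δ x y = Δ y x)
    (htri : ∀ x y z : G, Δ x z ≤ Δ x y + Δ y z)
    (hri : RightInvariant Δ) (ε : ℝ) :
    ∀ (n : ℕ) (Q : Finset G), Q.card ≤ n → ∀ P : Set G,
      (∀ x : G, ∃ q ∈ Q, ∃ p ∈ P, Δ p (q * x) ≤ ε) →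
      ∃ H : Set G, Cardinal.mk H ≤ max (Cardinal.mk P) Cardinal.aleph0 ∧
        ∀ x : G, ∃ h ∈ H, Δ x h ≤ 2 * ε := by
  classical
  intro n
  induction n with
  | zero =>
    intro Q hQ P hcov
    obtain ⟨q, hq, -⟩ := hcov 1
    rw [Finset.card_eq_zero.mp (Nat.le_zero.mp hQ)] at hq
    exact absurd hq (Finset.notMem_empty q)
  | succ n ih =>
    intro Q hQ P hcov
    by_cases hcase : ∀ g : G, ∃ c ∈ P, Δ g c ≤ 2 * ε
    · exact ⟨P, le_max_left _ _, hcase⟩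
    · push_neg at hcase
      obtain ⟨g, hg⟩ := hcase
      -- pick a q₀ ∈ Q
      obtain ⟨q₀, hq₀Q, -⟩ := hcov 1
      -- the enlarged set P'
      set P' : Set G := P ∪ Set.image2 (fun p c => p * (g⁻¹ * c)) P P with hP'def
      -- key rewriting identity
      have key : ∀ p₁ c A : G, Δ p₁ (A * (c⁻¹ * g)) = Δ (p₁ * (g⁻¹ * c)) A := by
        intro p₁ c A
        have h1 := hri (p₁ * (g⁻¹ * c)) A (c⁻¹ * g)
        have h2 : p₁ * (g⁻¹ * c) * (c⁻¹ * g) = p₁ := by group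
        rw [h2] at h1
        exact h1
      -- the reduced covering
      have hcov' : ∀ x : G, ∃ q ∈ Q.erase q₀, ∃ p ∈ P', Δ p (q * x) ≤ ε := by
        intro x
        obtain ⟨q, hqQ, c, hcP, hqc⟩ := hcov x
        by_cases hq : q = q₀
        · rw [hq] at hqc
          -- consider the translated point x * (c⁻¹ * g)
          obtain ⟨q₁, hq₁Q, p₁, hp₁P, hq₁p₁⟩ := hcov (x * (c⁻¹ * g))
          have hassoc : ∀ B : G, B * (x * (c⁻¹ * g)) = (B * x) * (c⁻¹ * g) := by
            intro B; group
          rw [hassoc, key p₁ c (q₁ * x)] at hq₁p₁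
          by_cases hq₁ : q₁ = q₀
          · exfalso
            rw [hq₁] at hq₁p₁
            -- Δ (p₁ * (g⁻¹ * c)) (q₀ * x) ≤ ε and Δ c (q₀ * x) ≤ ε
            have ht : Δ (p₁ * (g⁻¹ * c)) c ≤ 2 * ε := by
              have := htri (p₁ * (g⁻¹ * c)) (q₀ * x) c
              have hsc : Δ (q₀ * x) c = Δ c (q₀ * x) := hsymm _ _
              linarith
            -- rewrite Δ (p₁ * (g⁻¹ * c)) c = Δ p₁ g
            have e2 := hri (p₁ * g⁻¹) 1 c
            have e2' : p₁ * g⁻¹ * c = p₁ * (g⁻¹ * c) := by group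
            rw [e2', one_mul] at e2
            have e3 := hri (p₁ * g⁻¹) 1 g
            have e3' : p₁ * g⁻¹ * g = p₁ := by group
            rw [e3', one_mul] at e3
            have : Δ p₁ g ≤ 2 * ε := by rw [e3, ← e2]; exact ht
            have hgp := hg p₁ hp₁P
            rw [hsymm g p₁] at hgp
            linarith
          · refine ⟨q₁, Finset.mem_erase.mpr ⟨hq₁, hq₁Q⟩, p₁ * (g⁻¹ * c),
              Or.inr (Set.mem_image2_of_mem hp₁P hcP), hq₁p₁⟩
        · exact ⟨q, Finset.mem_erase.mpr ⟨hq, hqQ⟩, c, Or.inl hcP, hqc⟩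
      have hcard : (Q.erase q₀).card ≤ n := by
        have := Finset.card_erase_of_mem hq₀Q
        omega
      obtain ⟨H, hH1, hH2⟩ := ih (Q.erase q₀) hcard P' hcov'
      refine ⟨H, le_trans hH1 ?_, hH2⟩
      -- max (mk P') ℵ₀ ≤ max (mk P) ℵ₀
      have hMinf : Cardinal.aleph0 ≤ max (Cardinal.mk P) Cardinal.aleph0 := le_max_right _ _
      have hPle : Cardinal.mk P ≤ max (Cardinal.mk P) Cardinal.aleph0 := le_max_left _ _
      have himg : Cardinal.mk (Set.image2 (fun p c => p * (g⁻¹ * c)) P P : Set G)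
          ≤ Cardinal.mk P * Cardinal.mk P := by
        rw [← Set.image_prod]
        refine le_trans (Cardinal.mk_image_le) ?_
        rw [Cardinal.mk_congr (Equiv.Set.prod P P)]
        simp [Cardinal.mk_prod, Cardinal.lift_id]
      have hP'le : Cardinal.mk P' ≤ max (Cardinal.mk P) Cardinal.aleph0 := by
        refine le_trans (Cardinal.mk_union_le _ _) ?_
        have h1 : Cardinal.mk P * Cardinal.mk P
            ≤ max (Cardinal.mk P) Cardinal.aleph0 := by
          calc Cardinal.mk P * Cardinal.mk P
              ≤ max (Cardinal.mk P) Cardinal.aleph0 * max (Cardinal.mk P) Cardinal.aleph0 :=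
                mul_le_mul' hPle hPle
            _ = max (Cardinal.mk P) Cardinal.aleph0 := Cardinal.mul_eq_self hMinf
        calc Cardinal.mk P + Cardinal.mk (Set.image2 (fun p c => p * (g⁻¹ * c)) P P : Set G)
            ≤ max (Cardinal.mk P) Cardinal.aleph0 + max (Cardinal.mk P) Cardinal.aleph0 :=
              add_le_add hPle (le_trans himg h1)
          _ = max (Cardinal.mk P) Cardinal.aleph0 := Cardinal.add_eq_self hMinf
      exact max_le hP'le hMinf

end AuxProofs

/-- if `d(Δ) > ℵ₀` then `d(Δ) = lim_k Δ♭(kΔ)`, the supremum of the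
nondecreasing sequence `Δ♭(kΔ)`. -/
theorem dDens_eq_limit_deltaFlat {G : Type u} [Group G] [TopologicalSpace G]
    [IsTopologicalGroup G] (Δ : G → G → ℝ) (hΔ : IsCRIP Δ)
    (hd : Cardinal.aleph0 < dDens Δ) :
    (∀ j k : ℕ, j ≤ k →
      deltaFlat (fun x y => ((j : ℝ) + 1) * Δ x y) ≤
        deltaFlat (fun x y => ((k : ℝ) + 1) * Δ x y)) ∧
    dDens Δ = ⨆ k : ℕ, deltaFlat (fun x y => ((k : ℝ) + 1) * Δ x y) := by
  obtain ⟨⟨hzero, hsymm, htri⟩, hri, -⟩ := hΔ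
  have hnonneg : ∀ x y : G, 0 ≤ Δ x y := pseudo_nonneg hzero hsymm htri
  -- nonemptiness of the deltaFlat defining sets
  have hTne : ∀ k : ℕ, {c | ∃ P : Set G,
      (∃ Q : Set G, Q.Finite ∧ ∀ x : G, ∃ q ∈ Q, ∃ p ∈ P,
        ((k : ℝ) + 1) * Δ p (q * x) ≤ 1) ∧ c = Cardinal.mk P}.Nonempty := by
    intro k
    refine ⟨Cardinal.mk (Set.univ : Set G), Set.univ, ⟨{1}, Set.finite_singleton 1, ?_⟩, rfl⟩
    intro x
    refine ⟨1, Set.mem_singleton 1, x, Set.mem_univ x, ?_⟩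
    rw [one_mul, hzero x]
    norm_num
  -- monotonicity
  have mono : ∀ j k : ℕ, j ≤ k →
      deltaFlat (fun x y => ((j : ℝ) + 1) * Δ x y) ≤
        deltaFlat (fun x y => ((k : ℝ) + 1) * Δ x y) := by
    intro j k hjk
    unfold deltaFlat
    refine csInf_le_csInf (OrderBot.bddBelow _) (hTne k) ?_
    rintro c ⟨P, ⟨Q, hQfin, hQcov⟩, rfl⟩
    refine ⟨P, ⟨Q, hQfin, ?_⟩, rfl⟩
    intro x
    obtain ⟨q, hq, p, hp, hle⟩ := hQcov x
    refine ⟨q, hq, p, hp, le_trans ?_ hle⟩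
    have : ((j : ℝ) + 1) ≤ ((k : ℝ) + 1) := by exact_mod_cast Nat.succ_le_succ hjk
    exact mul_le_mul_of_nonneg_right this (hnonneg _ _)
  -- the easy inequality: each deltaFlat is at most dDens
  have hdense_ne : {c | ∃ H : Set G,
      (∀ x : G, ∀ ε : ℝ, 0 < ε → ∃ h ∈ H, Δ x h < ε) ∧ c = Cardinal.mk H}.Nonempty := by
    refine ⟨Cardinal.mk (Set.univ : Set G), Set.univ, ?_, rfl⟩
    intro x ε hε
    exact ⟨x, Set.mem_univ x, by rw [hzero x]; exact hε⟩
  obtain ⟨H₀, hH₀dense, hH₀card⟩ := card_sInf_mem hdense_ne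
  have flat_le : ∀ k : ℕ,
      deltaFlat (fun x y => ((k : ℝ) + 1) * Δ x y) ≤ dDens Δ := by
    intro k
    have hkpos : (0 : ℝ) < (k : ℝ) + 1 := by positivity
    have hmem : Cardinal.mk H₀ ∈ {c | ∃ P : Set G,
        (∃ Q : Set G, Q.Finite ∧ ∀ x : G, ∃ q ∈ Q, ∃ p ∈ P,
          ((k : ℝ) + 1) * Δ p (q * x) ≤ 1) ∧ c = Cardinal.mk P} := by
      refine ⟨H₀, ⟨{1}, Set.finite_singleton 1, ?_⟩, rfl⟩
      intro x
      obtain ⟨h, hh, hlt⟩ := hH₀dense x (1 / ((k : ℝ) + 1)) (by positivity)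
      refine ⟨1, Set.mem_singleton 1, h, hh, ?_⟩
      rw [one_mul, hsymm h x]
      have := mul_lt_mul_of_pos_left hlt hkpos
      rw [mul_one_div, div_self (ne_of_gt hkpos)] at this
      exact le_of_lt this
    have : deltaFlat (fun x y => ((k : ℝ) + 1) * Δ x y) ≤ Cardinal.mk H₀ := csInf_le' hmem
    rw [← hH₀card] at this
    exact this
  refine ⟨mono, le_antisymm ?_ (ciSup_le flat_le)⟩
  -- the hard inequality
  set S : Cardinal.{u} := ⨆ k : ℕ, deltaFlat (fun x y => ((k : ℝ) + 1) * Δ x y) with hSdef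
  have hbdd : BddAbove (Set.range fun k : ℕ =>
      deltaFlat (fun x y => ((k : ℝ) + 1) * Δ x y)) := by
    refine ⟨dDens Δ, ?_⟩
    rintro c ⟨k, rfl⟩
    exact flat_le k
  have key : ∀ k : ℕ, ∃ H : Set G,
      Cardinal.mk H ≤ max S Cardinal.aleph0 ∧
      ∀ x : G, ∃ h ∈ H, Δ x h ≤ 2 * (1 / ((k : ℝ) + 1)) := by
    intro k
    have hkpos : (0 : ℝ) < (k : ℝ) + 1 := by positivity
    obtain ⟨P, ⟨Q, hQfin, hQcov⟩, hPcard⟩ := card_sInf_mem (hTne k)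
    have hPleS : Cardinal.mk P ≤ S := by
      rw [← hPcard]
      exact le_ciSup hbdd k
    have hcov2 : ∀ x : G, ∃ q ∈ hQfin.toFinset, ∃ p ∈ P,
        Δ p (q * x) ≤ 1 / ((k : ℝ) + 1) := by
      intro x
      obtain ⟨q, hq, p, hp, hle⟩ := hQcov x
      refine ⟨q, hQfin.mem_toFinset.mpr hq, p, hp, ?_⟩
      rw [le_div_iff₀ hkpos, mul_comm]
      exact hle
    obtain ⟨H, hH1, hH2⟩ := neumann Δ hsymm htri hri (1 / ((k : ℝ) + 1))
      hQfin.toFinset.card hQfin.toFinset le_rfl P hcov2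
    exact ⟨H, le_trans hH1 (max_le_max_right _ hPleS), hH2⟩
  choose Hf h1 h2 using key
  have hdense : ∀ x : G, ∀ ε : ℝ, 0 < ε →
      ∃ h ∈ ⋃ k : ULift.{u} ℕ, Hf k.down, Δ x h < ε := by
    intro x ε hε
    obtain ⟨k, hk⟩ := exists_nat_one_div_lt (half_pos hε)
    obtain ⟨h, hh, hhd⟩ := h2 k x
    refine ⟨h, Set.mem_iUnion.mpr ⟨ULift.up k, hh⟩, ?_⟩
    have : (2 : ℝ) * (1 / ((k : ℝ) + 1)) < 2 * (ε / 2) := by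
      have : (1 : ℝ) / ((k : ℝ) + 1) < ε / 2 := by exact_mod_cast hk
      linarith
    linarith
  have hdd : dDens Δ ≤ Cardinal.mk (⋃ k : ULift.{u} ℕ, Hf k.down : Set G) :=
    csInf_le' ⟨(⋃ k : ULift.{u} ℕ, Hf k.down), hdense, rfl⟩
  have hUle : Cardinal.mk (⋃ k : ULift.{u} ℕ, Hf k.down : Set G)
      ≤ max S Cardinal.aleph0 := by
    refine le_trans (Cardinal.mk_iUnion_le _) ?_
    have h3 : (⨆ k : ULift.{u} ℕ, Cardinal.mk (Hf k.down)) ≤ max S Cardinal.aleph0 :=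
      ciSup_le fun k => h1 k.down
    calc Cardinal.mk (ULift.{u} ℕ) * ⨆ k : ULift.{u} ℕ, Cardinal.mk (Hf k.down)
        ≤ Cardinal.aleph0 * max S Cardinal.aleph0 := by
          refine mul_le_mul' ?_ h3
          simp
      _ ≤ max S Cardinal.aleph0 * max S Cardinal.aleph0 :=
          mul_le_mul' (le_max_right _ _) le_rfl
      _ = max S Cardinal.aleph0 := Cardinal.mul_eq_self (le_max_right _ _)
  have : dDens Δ ≤ max S Cardinal.aleph0 := le_trans hdd hUle
  rcases le_max_iff.mp this with h | h
  · exact h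
  · exact absurd h (not_le.mpr hd)
end

section
/- A topological group G is precompact if and only if Δ♭(Δ) is finite for every continuous right-invariant pseudometric Δ on G. (Equivalently: G is precompact iff for every neighbourhood B of the identity there exist finite sets Q, P ⊆ G with G = QBP.) -/
open Cardinal Topology

universe u

/-- Auxiliary: a B.H. Neumann-style covering lemma for balls of right-invariant
pseudometrics.  If `G` is covered by finitely many unit balls (with arbitrary
centres) of pseudometrics all belonging to a finite list `ms`, then some metric
in `ms` admits a finite net of radius `2`. -/
lemma neumann_cover_lemma {G : Type u} [Group G] :
    ∀ ms : List (G → G → ℝ), ∀ S : Set ((G → G → ℝ) × G), S.Finite →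
      (∀ p ∈ S, IsPseudometric p.1 ∧ RightInvariant p.1) →
      (∀ p ∈ S, p.1 ∈ ms) →
      (∀ x : G, ∃ p ∈ S, p.1 p.2 x ≤ 1) →
      ∃ f ∈ ms, ∃ cs : List G, ∀ x : G, ∃ c ∈ cs, f c x ≤ 2 := by
  intro ms
  induction ms with
  | nil =>
    intro S _ _ hmem hcov
    obtain ⟨p, hp, -⟩ := hcov 1
    exact absurd (hmem p hp) List.not_mem_nil
  | cons f ms ih =>
    intro S hfin hprops hmem hcov
    by_cases hA : ∃ cs : List G, ∀ x : G, ∃ c ∈ cs, f c x ≤ 2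
    · exact ⟨f, List.mem_cons_self, hA⟩
    · push_neg at hA
      obtain ⟨y, hy⟩ := hA (hfin.toFinset.toList.map Prod.snd)
      have hy' : ∀ p ∈ S, 2 < f p.2 y := by
        intro p hp
        exact hy p.2 (List.mem_map.mpr
          ⟨p, Finset.mem_toList.mpr (hfin.mem_toFinset.mpr hp), rfl⟩)
      -- pieces whose metric is not `f`
      set S₀ : Set ((G → G → ℝ) × G) := {p ∈ S | p.1 ≠ f} with hS₀
      set S' : Set ((G → G → ℝ) × G) :=
        S₀ ∪ (fun pq : ((G → G → ℝ) × G) × ((G → G → ℝ) × G) =>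
          (pq.1.1, pq.1.2 * (y⁻¹ * pq.2.2))) '' (S₀ ×ˢ S) with hS'
      have hS₀sub : S₀ ⊆ S := Set.sep_subset _ _
      have hfin' : S'.Finite :=
        (hfin.subset hS₀sub).union (((hfin.subset hS₀sub).prod hfin).image _)
      have hprops' : ∀ p ∈ S', IsPseudometric p.1 ∧ RightInvariant p.1 := by
        rintro p (⟨hp, -⟩ | ⟨⟨p1, p2⟩, ⟨⟨hp1, -⟩, -⟩, rfl⟩)
        · exact hprops p hp
        · exact hprops p1 hp1
      have hmem' : ∀ p ∈ S', p.1 ∈ ms := by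
        rintro p (⟨hp, hne⟩ | ⟨⟨p1, p2⟩, ⟨⟨hp1, hne⟩, -⟩, rfl⟩)
        · rcases List.mem_cons.mp (hmem p hp) with h | h
          · exact absurd h hne
          · exact h
        · rcases List.mem_cons.mp (hmem p1 hp1) with h | h
          · exact absurd h hne
          · exact h
      have hcov' : ∀ x : G, ∃ p ∈ S', p.1 p.2 x ≤ 1 := by
        intro x
        obtain ⟨p, hp, hple⟩ := hcov x
        by_cases hpf : p.1 = f
        · have hfprops := hprops p hp
          rw [hpf] at hfprops hple
          obtain ⟨hfps, hfri⟩ := hfprops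
          -- `z` is the translate of `x` moving the centre `p.2` to `y`
          set z : G := x * p.2⁻¹ * y with hz
          have hyz : f y z ≤ 1 := by
            have h1 : f y z = f p.2 x := by
              have e1 : y * (y⁻¹ * p.2) = p.2 := by group
              have e2 : z * (y⁻¹ * p.2) = x := by rw [hz]; group
              calc f y z = f (y * (y⁻¹ * p.2)) (z * (y⁻¹ * p.2)) :=
                    (hfri y z (y⁻¹ * p.2)).symm
                _ = f p.2 x := by rw [e1, e2]
            rw [h1]; exact hple
          obtain ⟨p', hp', hp'le⟩ := hcov z
          have hp'f : p'.1 ≠ f := by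
            intro hq
            rw [hq] at hp'le
            have htri := hfps.2.2 p'.2 z y
            have hsym := hfps.2.1 y z
            have : f p'.2 y ≤ 2 := by
              have : f z y ≤ 1 := by rw [← hsym]; exact hyz
              linarith
            exact absurd (hy' p' hp') (not_lt.mpr this)
          refine ⟨(p'.1, p'.2 * (y⁻¹ * p.2)),
            Or.inr ⟨(p', p), Set.mem_prod.mpr ⟨⟨hp', hp'f⟩, hp⟩, rfl⟩, ?_⟩
          have e3 : z * (y⁻¹ * p.2) = x := by rw [hz]; group
          have hri' := (hprops p' hp').2 p'.2 z (y⁻¹ * p.2)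
          rw [e3] at hri'
          calc p'.1 (p'.2 * (y⁻¹ * p.2)) x = p'.1 p'.2 z := hri'
            _ ≤ 1 := hp'le
        · exact ⟨p, Or.inl ⟨hp, hpf⟩, hple⟩
      obtain ⟨g, hg, cs, hcs⟩ := ih S' hfin' hprops' hmem' hcov'
      exact ⟨g, List.mem_cons_of_mem f hg, cs, hcs⟩

/-- The conjugated (and doubled) pseudometric `(u,v) ↦ 2·Δ(quq⁻¹, qvq⁻¹)`. -/
def conjMetric {G : Type u} [Group G] (Δ : G → G → ℝ) (q : G) : G → G → ℝ :=
  fun u v => 2 * Δ (q * u * q⁻¹) (q * v * q⁻¹)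

lemma conjMetric_isPseudometric {G : Type u} [Group G] {Δ : G → G → ℝ}
    (hps : IsPseudometric Δ) (q : G) : IsPseudometric (conjMetric Δ q) := by
  refine ⟨fun x => ?_, fun x y => ?_, fun x y z => ?_⟩
  · show 2 * Δ (q * x * q⁻¹) (q * x * q⁻¹) = 0
    rw [hps.1]; ring
  · show 2 * Δ (q * x * q⁻¹) (q * y * q⁻¹) = 2 * Δ (q * y * q⁻¹) (q * x * q⁻¹)
    rw [hps.2.1]
  · have := hps.2.2 (q * x * q⁻¹) (q * y * q⁻¹) (q * z * q⁻¹)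
    show 2 * Δ (q * x * q⁻¹) (q * z * q⁻¹) ≤
      2 * Δ (q * x * q⁻¹) (q * y * q⁻¹) + 2 * Δ (q * y * q⁻¹) (q * z * q⁻¹)
    linarith

lemma conjMetric_rightInvariant {G : Type u} [Group G] {Δ : G → G → ℝ}
    (hri : RightInvariant Δ) (q : G) : RightInvariant (conjMetric Δ q) := by
  intro z z' x
  show 2 * Δ (q * (z * x) * q⁻¹) (q * (z' * x) * q⁻¹) =
    2 * Δ (q * z * q⁻¹) (q * z' * q⁻¹)
  have e1 : q * (z * x) * q⁻¹ = (q * z) * (x * q⁻¹) := by group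
  have e2 : q * (z' * x) * q⁻¹ = (q * z') * (x * q⁻¹) := by group
  have e3 : q * z = (q * z * q⁻¹) * q := by group
  have e4 : q * z' = (q * z' * q⁻¹) * q := by group
  calc 2 * Δ (q * (z * x) * q⁻¹) (q * (z' * x) * q⁻¹)
      = 2 * Δ ((q * z) * (x * q⁻¹)) ((q * z') * (x * q⁻¹)) := by rw [e1, e2]
    _ = 2 * Δ (q * z) (q * z') := by rw [hri (q * z) (q * z') (x * q⁻¹)]
    _ = 2 * Δ ((q * z * q⁻¹) * q) ((q * z' * q⁻¹) * q) := by rw [← e3, ← e4]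
    _ = 2 * Δ (q * z * q⁻¹) (q * z' * q⁻¹) := by
        rw [hri (q * z * q⁻¹) (q * z' * q⁻¹) q]

/-- Main step (Uspenskij): a `Q⁻¹·B·P`-type cover at radius `1/2` with `Q, P`
finite yields a finite `1`-net. -/
lemma exists_net_of_cover {G : Type u} [Group G] (Δ : G → G → ℝ)
    (hps : IsPseudometric Δ) (hri : RightInvariant Δ)
    (Q P : Set G) (hQ : Q.Finite) (hP : P.Finite)
    (hcov : ∀ x : G, ∃ q ∈ Q, ∃ p ∈ P, Δ p (q * x) ≤ 1 / 2) :
    ∃ F : Set G, F.Finite ∧ ∀ x : G, ∃ p ∈ F, Δ p x ≤ 1 := by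
  classical
  set ms : List (G → G → ℝ) := hQ.toFinset.toList.map (conjMetric Δ) with hms
  set S : Set ((G → G → ℝ) × G) :=
    (fun qp : G × G => (conjMetric Δ qp.1, qp.1⁻¹ * qp.2)) '' (Q ×ˢ P) with hS
  have hSfin : S.Finite := (hQ.prod hP).image _
  have hSprops : ∀ p ∈ S, IsPseudometric p.1 ∧ RightInvariant p.1 := by
    rintro _ ⟨⟨q, p⟩, -, rfl⟩
    exact ⟨conjMetric_isPseudometric hps q, conjMetric_rightInvariant hri q⟩
  have hSmem : ∀ p ∈ S, p.1 ∈ ms := by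
    rintro _ ⟨⟨q, p⟩, ⟨hq, -⟩, rfl⟩
    exact List.mem_map.mpr ⟨q, Finset.mem_toList.mpr (hQ.mem_toFinset.mpr hq), rfl⟩
  have hScov : ∀ x : G, ∃ pc ∈ S, pc.1 pc.2 x ≤ 1 := by
    intro x
    obtain ⟨q, hq, p, hp, hle⟩ := hcov x
    refine ⟨(conjMetric Δ q, q⁻¹ * p), ⟨(q, p), Set.mem_prod.mpr ⟨hq, hp⟩, rfl⟩, ?_⟩
    show 2 * Δ (q * (q⁻¹ * p) * q⁻¹) (q * x * q⁻¹) ≤ 1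
    have e1 : q * (q⁻¹ * p) * q⁻¹ = p * q⁻¹ := by group
    have e2 : q * x * q⁻¹ = (q * x) * q⁻¹ := by group
    rw [e1, e2, hri p (q * x) q⁻¹]
    linarith
  obtain ⟨g, hg, cs, hcs⟩ := neumann_cover_lemma ms S hSfin hSprops hSmem hScov
  obtain ⟨q₀, -, hq₀⟩ := List.mem_map.mp hg
  refine ⟨(fun c => q₀ * c * q₀⁻¹) '' {c | c ∈ cs}, (cs.finite_toSet).image _, ?_⟩
  intro x
  obtain ⟨c, hc, hle⟩ := hcs (q₀⁻¹ * x * q₀)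
  rw [← hq₀] at hle
  have hle2 : 2 * Δ (q₀ * c * q₀⁻¹) (q₀ * (q₀⁻¹ * x * q₀) * q₀⁻¹) ≤ 2 := hle
  have e : q₀ * (q₀⁻¹ * x * q₀) * q₀⁻¹ = x := by group
  rw [e] at hle2
  exact ⟨q₀ * c * q₀⁻¹, ⟨c, hc, rfl⟩, by linarith⟩

/-- Uspenskij's theorem: `G` is precompact (each `η♯(Δ)` finite)
iff `Δ♭(Δ)` is finite for every continuous right-invariant pseudometric `Δ`. -/
theorem precompact_iff_deltaFlat_finite {G : Type u} [Group G] [TopologicalSpace G]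
    [IsTopologicalGroup G] :
    (∀ Δ : G → G → ℝ, IsCRIP Δ → etaSharp Δ < Cardinal.aleph0) ↔
    (∀ Δ : G → G → ℝ, IsCRIP Δ → deltaFlat Δ < Cardinal.aleph0) := by
  constructor
  · -- easy direction: take `Q = {1}`
    intro h Δ hΔ
    have h1 := h Δ hΔ
    have hne : {c | ∃ P : Set G, (∀ x : G, ∃ p ∈ P, Δ p x ≤ 1) ∧
        c = Cardinal.mk P}.Nonempty :=
      ⟨_, Set.univ, fun x => ⟨x, Set.mem_univ x, by rw [hΔ.1.1 x]; norm_num⟩, rfl⟩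
    obtain ⟨P, hPcov, hPeq⟩ := csInf_mem hne
    have hle : deltaFlat Δ ≤ Cardinal.mk P :=
      csInf_le' ⟨P, ⟨{1}, Set.finite_singleton 1,
        fun x => ⟨1, Set.mem_singleton 1, by simpa using hPcov x⟩⟩, rfl⟩
    have h2 : Cardinal.mk P < Cardinal.aleph0 := by rw [← hPeq]; exact h1
    exact lt_of_le_of_lt hle h2
  · -- hard direction (Uspenskij)
    intro h Δ hΔ
    -- apply the hypothesis to `2·Δ`
    set Δ₂ : G → G → ℝ := fun a b => 2 * Δ a b with hΔ₂def
    have hΔ₂ : IsCRIP Δ₂ := by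
      refine ⟨⟨fun x => ?_, fun x y => ?_, fun x y z => ?_⟩, fun z z' x => ?_, ?_⟩
      · show 2 * Δ x x = 0
        rw [hΔ.1.1 x]; ring
      · show 2 * Δ x y = 2 * Δ y x
        rw [hΔ.1.2.1 x y]
      · have := hΔ.1.2.2 x y z
        show 2 * Δ x z ≤ 2 * Δ x y + 2 * Δ y z
        linarith
      · show 2 * Δ (z * x) (z' * x) = 2 * Δ z z'
        rw [hΔ.2.1 z z' x]
      · exact continuous_const.mul hΔ.2.2
    have h2 := h Δ₂ hΔ₂
    have hne : {c | ∃ P : Set G,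
        (∃ Q : Set G, Q.Finite ∧ ∀ x : G, ∃ q ∈ Q, ∃ p ∈ P, Δ₂ p (q * x) ≤ 1) ∧
        c = Cardinal.mk P}.Nonempty := by
      refine ⟨_, Set.univ, ⟨{1}, Set.finite_singleton 1, fun x => ?_⟩, rfl⟩
      refine ⟨1, Set.mem_singleton 1, 1 * x, Set.mem_univ _, ?_⟩
      show 2 * Δ (1 * x) (1 * x) ≤ 1
      rw [hΔ.1.1]; norm_num
    obtain ⟨P, ⟨Q, hQfin, hcov⟩, hPeq⟩ := csInf_mem hne
    have hPlt : Cardinal.mk P < Cardinal.aleph0 := by rw [← hPeq]; exact h2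
    have hPfin : P.Finite :=
      Set.finite_coe_iff.mp (Cardinal.mk_lt_aleph0_iff.mp hPlt)
    have hcov' : ∀ x : G, ∃ q ∈ Q, ∃ p ∈ P, Δ p (q * x) ≤ 1 / 2 := by
      intro x
      obtain ⟨q, hq, p, hp, hle⟩ := hcov x
      have hle' : 2 * Δ p (q * x) ≤ 1 := hle
      exact ⟨q, hq, p, hp, by linarith⟩
    obtain ⟨F, hFfin, hFcov⟩ :=
      exists_net_of_cover Δ hΔ.1 hΔ.2.1 Q P hQfin hPfin hcov'
    have hle : etaSharp Δ ≤ Cardinal.mk F := csInf_le' ⟨F, hFcov, rfl⟩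
    exact lt_of_le_of_lt hle
      (Cardinal.mk_lt_aleph0_iff.mpr (Set.finite_coe_iff.mpr hFfin))
end

section
/- Let Δ be a pseudometric on a group G with Δ♭(Δ) ≥ ℵ₀. Let A be a set of cardinality Δ♭(Δ), and for each α ∈ A let F_α be a non-empty finite subset of G. Then there exist elements x_α ∈ G (α ∈ A) such that Δ(F_α x_α, F_β x_β) > 1 whenever α ≠ β, i.e., Δ(p x_α, q x_β) > 1 for all p ∈ F_α, q ∈ F_β. -/
open Cardinal Topology

universe u

/-- separation of translates of finite sets: if `Δ♭(Δ) ≥ ℵ₀` and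
`(F_α)_{α ∈ A}` are nonempty finite subsets of `G` with `|A| = Δ♭(Δ)`, then there are
`x_α ∈ G` with `Δ(F_α x_α, F_β x_β) > 1` for `α ≠ β`. -/
theorem separated_translates {G : Type u} [Group G] (Δ : G → G → ℝ)
    (hΔ : IsPseudometric Δ) (hbig : Cardinal.aleph0 ≤ deltaFlat Δ)
    (A : Type u) (hA : Cardinal.mk A = deltaFlat Δ)
    (F : A → Finset G) (hF : ∀ α, (F α).Nonempty) :
    ∃ x : A → G, ∀ α β : A, α ≠ β →
      ∀ p ∈ F α, ∀ q ∈ F β, 1 < Δ (p * x α) (q * x β) := by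
  classical
  obtain ⟨e⟩ : Nonempty (A ≃ (Cardinal.mk A).ord.ToType) := by
    rw [← Cardinal.eq, Cardinal.mk_toType, Cardinal.card_ord]
  set r : A → A → Prop := fun a b => e a < e b with hr
  have hwf : WellFounded r := InvImage.wf e IsWellFounded.wf
  -- initial segments are small
  have hseg : ∀ a : A, Cardinal.mk {b : A // r b a} < Cardinal.mk A := by
    intro a
    have h1 : Cardinal.mk {b : A // r b a} = Cardinal.mk {c // c < e a} :=
      Cardinal.mk_congr (e.subtypeEquiv fun b => Iff.rfl)
    rw [h1]
    exact Cardinal.mk_Iio_ord_toType (e a)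
  -- key existence lemma
  have key : ∀ (a : A) (ih : ∀ b, r b a → G), ∃ g : G,
      ∀ b (hb : r b a), ∀ p ∈ F a, ∀ q ∈ F b, 1 < Δ (p * g) (q * ih b hb) := by
    intro a ih
    by_contra hcon
    push_neg at hcon
    set P : Set G := {y | ∃ b, ∃ hb : r b a, ∃ q ∈ F b, y = q * ih b hb} with hP
    have hcover : ∀ x : G, ∃ q' ∈ (↑(F a) : Set G), ∃ p' ∈ P, Δ p' (q' * x) ≤ 1 := by
      intro x
      obtain ⟨b, hb, p, hp, q, hq, hle⟩ := hcon x
      exact ⟨p, hp, q * ih b hb, ⟨b, hb, q, hq, rfl⟩, by rwa [hΔ.2.1]⟩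
    have hle : deltaFlat Δ ≤ Cardinal.mk P :=
      csInf_le' ⟨P, ⟨↑(F a), (F a).finite_toSet, hcover⟩, rfl⟩
    have hsurj : ∃ f : (Σ b : {b : A // r b a}, (F b.1 : Finset G)) → P,
        Function.Surjective f := by
      refine ⟨fun z => ⟨(z.2 : G) * ih z.1.1 z.1.2, ⟨z.1.1, z.1.2, z.2, z.2.2, rfl⟩⟩, ?_⟩
      rintro ⟨y, b, hb, q, hq, rfl⟩
      exact ⟨⟨⟨b, hb⟩, ⟨q, hq⟩⟩, rfl⟩
    obtain ⟨f, hf⟩ := hsurj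
    have hP_le : Cardinal.mk P ≤ Cardinal.mk (Σ b : {b : A // r b a}, (F b.1 : Finset G)) :=
      Cardinal.mk_le_of_surjective hf
    have hsig : Cardinal.mk (Σ b : {b : A // r b a}, (F b.1 : Finset G)) < Cardinal.mk A := by
      rcases lt_or_ge (Cardinal.mk {b : A // r b a}) Cardinal.aleph0 with hfin | hinf
      · have : Finite {b : A // r b a} := Cardinal.lt_aleph0_iff_finite.mp hfin
        have : Finite (Σ b : {b : A // r b a}, (F b.1 : Finset G)) := by infer_instance
        calc Cardinal.mk (Σ b : {b : A // r b a}, (F b.1 : Finset G)) < Cardinal.aleph0 :=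
              Cardinal.lt_aleph0_of_finite _
          _ ≤ Cardinal.mk A := hA ▸ hbig
      · calc Cardinal.mk (Σ b : {b : A // r b a}, (F b.1 : Finset G))
            = Cardinal.sum (fun b : {b : A // r b a} => Cardinal.mk (F b.1 : Finset G)) :=
              Cardinal.mk_sigma _
          _ ≤ Cardinal.sum (fun _ : {b : A // r b a} => Cardinal.aleph0) :=
              Cardinal.sum_le_sum _ _ (fun b => (Cardinal.lt_aleph0_of_finite _).le)
          _ = Cardinal.mk {b : A // r b a} * Cardinal.aleph0 := Cardinal.sum_const' _ _
          _ = Cardinal.mk {b : A // r b a} := Cardinal.mul_aleph0_eq hinf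
          _ < Cardinal.mk A := hseg a
    exact absurd (hA ▸ hle) (not_le.mpr (lt_of_le_of_lt hP_le hsig))
  -- define x by well-founded recursion
  set x : A → G := hwf.fix (fun a ih => (key a ih).choose) with hx
  have hx_spec : ∀ a : A, ∀ b (hb : r b a), ∀ p ∈ F a, ∀ q ∈ F b,
      1 < Δ (p * x a) (q * x b) := by
    intro a
    have heq : x a = (key a (fun b _ => x b)).choose := hwf.fix_eq _ a
    have := (key a (fun b _ => x b)).choose_spec
    rw [← heq] at this
    exact this
  refine ⟨x, fun α β hne p hp q hq => ?_⟩
  rcases lt_trichotomy (e α) (e β) with h | h | h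
  · rw [hΔ.2.1]
    exact hx_spec β α h q hq p hp
  · exact absurd (e.injective h) hne
  · exact hx_spec α β h p hp q hq
end

section
/- Let G be a topological group, Δ a continuous right-invariant pseudometric on G with Δ♭(Δ) ≥ ℵ₀. If 𝒪 is a family of non-empty open subsets of BLip⁺(Δ) (with the pointwise topology) and |𝒪| ≤ Δ♭(Δ), then there exists f ∈ BLip⁺(Δ) whose right orbit { x·f | x ∈ G } intersects every set in 𝒪. -/
open Cardinal Topology

universe u

open Set

lemma min_one_lip (a b : ℝ) : |min 1 a - min 1 b| ≤ |a - b| := by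
  rcases le_total a b with h | h <;> rcases le_total a 1 with h1 | h1 <;>
    rcases le_total b 1 with h2 | h2 <;>
    simp [min_def, abs_le] <;> split_ifs <;>
    constructor <;> cases abs_cases (a - b) <;> linarith

lemma basic_nbhd {α : Type u} (V : Set (α → ℝ)) (hV : IsOpen V) (g : α → ℝ) (hg : g ∈ V) :
    ∃ (F : Finset α) (ε : ℝ), 0 < ε ∧ ∀ h : α → ℝ, (∀ z ∈ F, |h z - g z| < ε) → h ∈ V := by
  obtain ⟨I, u, hu, hsub⟩ := isOpen_pi_iff.mp hV g hg
  have hball : ∀ i ∈ I, ∃ ε > 0, Metric.ball (g i) ε ⊆ u i := by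
    intro i hi
    exact Metric.isOpen_iff.mp (hu i hi).1 _ (hu i hi).2
  choose! εf hεf hsb using hball
  classical
  refine ⟨I, if h : I.Nonempty then I.inf' h εf else 1, ?_, ?_⟩
  · split_ifs with h
    · exact (Finset.lt_inf'_iff h).2 fun i hi => hεf i hi
    · norm_num
  · intro h hh
    apply hsub
    intro i hi
    have hIne : I.Nonempty := ⟨i, hi⟩
    rw [dif_pos hIne] at hh
    have := hh i hi
    have hle : I.inf' hIne εf ≤ εf i := Finset.inf'_le _ hi
    exact hsb i hi (by rw [Metric.mem_ball, Real.dist_eq]; linarith)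

/-- if `Δ♭(Δ) ≥ ℵ₀` and `𝒪` is a family of at most `Δ♭(Δ)` nonempty
relatively open subsets of `BLip⁺(Δ)`, then some `f ∈ BLip⁺(Δ)` has orbit meeting
every member of `𝒪`. -/
theorem orbit_meets_open_family {G : Type u} [Group G] [TopologicalSpace G]
    [IsTopologicalGroup G] (Δ : G → G → ℝ) (hΔ : IsCRIP Δ)
    (hbig : Cardinal.aleph0 ≤ deltaFlat Δ)
    (𝒪 : Set (Set (G → ℝ)))
    (hopen : ∀ U ∈ 𝒪, U.Nonempty ∧ ∃ V : Set (G → ℝ), IsOpen V ∧ U = V ∩ BLip Δ)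
    (hcard : Cardinal.mk 𝒪 ≤ deltaFlat Δ) :
    ∃ f ∈ BLip Δ, ∀ U ∈ 𝒪, ∃ x : G, rtrans x f ∈ U := by
  classical
  obtain ⟨⟨hzero, hsymm, htri⟩, hinv, _⟩ := hΔ
  have hnn : ∀ x y : G, 0 ≤ Δ x y := by
    intro x y
    have := htri x y x
    rw [hzero, hsymm y x] at this
    linarith
  set κ := deltaFlat Δ with hκ
  set ι := ↥𝒪 with hι
  -- data for each open set
  have hdata : ∀ i : ι, ∃ (g : G → ℝ) (F : Finset G), g ∈ BLip Δ ∧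
      ∀ h : G → ℝ, h ∈ BLip Δ → (∀ z ∈ F, h z = g z) → h ∈ (i : Set (G → ℝ)) := by
    intro ⟨U, hU⟩
    obtain ⟨⟨g0, hg0⟩, V, hVopen, hUV⟩ := hopen U hU
    have hg0V : g0 ∈ V := (hUV ▸ hg0).1
    have hg0B : g0 ∈ BLip Δ := (hUV ▸ hg0).2
    obtain ⟨F, ε, hε, hF⟩ := basic_nbhd V hVopen g0 hg0V
    refine ⟨g0, F, hg0B, fun h hB hz => ?_⟩
    have : h ∈ V := hF h (fun z hzF => by rw [hz z hzF]; simpa using hε)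
    show h ∈ U
    rw [hUV]; exact ⟨this, hB⟩
  choose g F hgB hprop using hdata
  -- the separation existence lemma
  have exists_good : ∀ (Fi : Finset G) (s : Set G), Cardinal.mk s < κ →
      ∃ x : G, ∀ p ∈ Fi, ∀ c ∈ s, 1 ≤ Δ c (p * x) := by
    intro Fi s hs
    by_contra hcon
    push_neg at hcon
    have : κ ≤ Cardinal.mk s := by
      apply csInf_le'
      refine ⟨s, ⟨(Fi : Set G), Fi.finite_toSet, fun x => ?_⟩, rfl⟩
      obtain ⟨p, hp, c, hc, hlt⟩ := hcon x
      exact ⟨p, hp, c, hc, le_of_lt hlt⟩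
    exact absurd this (not_le.mpr hs)
  -- well order on ι with small initial segments
  obtain ⟨e⟩ : Nonempty (ι ↪ κ.ord.ToType) := by
    rw [← Cardinal.le_def, Cardinal.mk_ord_toType]
    exact hcard
  set r : ι → ι → Prop := fun a b => e a < e b with hr
  have hwf : WellFounded r := InvImage.wf e (wellFounded_lt)
  have hseg : ∀ i : ι, Cardinal.mk {j : ι // r j i} < κ := by
    intro i
    calc Cardinal.mk {j : ι // r j i} ≤ Cardinal.mk (Iio (e i)) := by
          apply Cardinal.mk_le_of_injective (f := fun j => (⟨e j.1, j.2⟩ : Iio (e i)))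
          intro a b hab
          exact Subtype.ext (e.injective (congrArg Subtype.val hab))
      _ < κ := Cardinal.mk_Iio_ord_toType (e i)
  -- the small prior sets
  set Cset : ∀ i : ι, (∀ j, r j i → G) → Set G :=
    fun i rec => ⋃ j : {j : ι // r j i}, (fun q => q * rec j.1 j.2) '' (F j.1 : Set G) with hCset
  have hCsmall : ∀ i rec, Cardinal.mk (Cset i rec) < κ := by
    intro i rec
    rcases finite_or_infinite {j : ι // r j i} with hfin | hinf
    · have : (Cset i rec).Finite :=
        Set.finite_iUnion fun j => ((F j.1).finite_toSet).image _
      exact lt_of_lt_of_le this.lt_aleph0 hbig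
    · have h1 : Cardinal.mk (Cset i rec) ≤
          Cardinal.mk {j : ι // r j i} * ⨆ j : {j : ι // r j i},
            Cardinal.mk ((fun q => q * rec j.1 j.2) '' (F j.1 : Set G)) :=
        Cardinal.mk_iUnion_le _
      have h2 : (⨆ j : {j : ι // r j i},
          Cardinal.mk ((fun q => q * rec j.1 j.2) '' (F j.1 : Set G))) ≤ ℵ₀ := by
        apply ciSup_le'
        intro j
        exact le_of_lt ((((F j.1).finite_toSet).image _).lt_aleph0)
      have hidx : ℵ₀ ≤ Cardinal.mk {j : ι // r j i} := Cardinal.infinite_iff.mp hinf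
      calc Cardinal.mk (Cset i rec) ≤ Cardinal.mk {j : ι // r j i} * ℵ₀ :=
            h1.trans (mul_le_mul_right h2 _)
        _ = Cardinal.mk {j : ι // r j i} := by
            rw [Cardinal.mul_eq_max hidx le_rfl, max_eq_left hidx]
        _ < κ := hseg i
  -- define the translates by recursion
  set xf : ι → G := hwf.fix (fun i rec =>
    Classical.choose (exists_good (F i) (Cset i rec) (hCsmall i rec))) with hxf
  have hxspec : ∀ i : ι, ∀ p ∈ F i, ∀ c ∈ Cset i (fun j _ => xf j), 1 ≤ Δ c (p * xf i) := by
    intro i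
    have heq : xf i = Classical.choose (exists_good (F i) (Cset i (fun j _ => xf j))
        (hCsmall i (fun j _ => xf j))) := by
      rw [hxf]
      exact hwf.fix_eq _ i
    rw [heq]
    exact Classical.choose_spec (exists_good (F i) (Cset i (fun j _ => xf j))
      (hCsmall i (fun j _ => xf j)))
  have hsep : ∀ i j : ι, r j i → ∀ p ∈ F i, ∀ q ∈ F j, 1 ≤ Δ (q * xf j) (p * xf i) := by
    intro i j hji p hp q hq
    apply hxspec i p hp
    exact Set.mem_iUnion.mpr ⟨⟨j, hji⟩, Set.mem_image_of_mem _ hq⟩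
  -- the function
  set S : G → Set ℝ := fun z => {y | ∃ i : ι, ∃ p ∈ F i, y = g i p + Δ z (p * xf i)} with hS
  have hSbdd : ∀ z, ∀ y ∈ S z, (0:ℝ) ≤ y := by
    rintro z y ⟨i, p, hp, rfl⟩
    have := (hgB i).1 p
    have := hnn z (p * xf i)
    linarith
  have hSbddBelow : ∀ z, BddBelow (S z) := fun z => ⟨0, fun y hy => hSbdd z y hy⟩
  set f : G → ℝ := fun z => min 1 (sInf (S z)) with hf
  -- Lipschitz bound for sInf
  have hInfLip : ∀ z w : G, (S z).Nonempty → sInf (S z) ≤ sInf (S w) + Δ z w := by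
    intro z w hne
    have hneW : (S w).Nonempty := by
      obtain ⟨y, i, p, hp, rfl⟩ := hne
      exact ⟨_, i, p, hp, rfl⟩
    have : sInf (S z) - Δ z w ≤ sInf (S w) := by
      apply le_csInf hneW
      rintro b ⟨i, p, hp, rfl⟩
      have hmem : g i p + Δ z (p * xf i) ∈ S z := ⟨i, p, hp, rfl⟩
      have h1 : sInf (S z) ≤ g i p + Δ z (p * xf i) := csInf_le (hSbddBelow z) hmem
      have h2 : Δ z (p * xf i) ≤ Δ z w + Δ w (p * xf i) := htri _ _ _
      linarith
    linarith
  have hfB : f ∈ BLip Δ := by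
    constructor
    · intro z
      constructor
      · exact le_min (by norm_num) (Real.sInf_nonneg (hSbdd z))
      · exact min_le_left _ _
    · intro z w
      rcases Set.eq_empty_or_nonempty (S z) with hEz | hnz
      · have hEw : S w = ∅ := by
          rw [Set.eq_empty_iff_forall_notMem] at hEz ⊢
          rintro y ⟨i, p, hp, rfl⟩
          exact hEz _ ⟨i, p, hp, rfl⟩
        simp only [hf, hEz, hEw]
        simpa using hnn z w
      · have hnw : (S w).Nonempty := by
          obtain ⟨y, i, p, hp, rfl⟩ := hnz
          exact ⟨_, i, p, hp, rfl⟩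
        have h1 := hInfLip z w hnz
        have h2 := hInfLip w z hnw
        rw [hsymm w z] at h2
        calc |f z - f w| ≤ |sInf (S z) - sInf (S w)| := min_one_lip _ _
          _ ≤ Δ z w := abs_sub_le_iff.mpr ⟨by linarith, by linarith⟩
  -- value on the translated finite sets
  have hval : ∀ i : ι, ∀ p ∈ F i, f (p * xf i) = g i p := by
    intro i p hp
    have hgi := hgB i
    have hg01 := hgi.1 p
    have hmem : g i p + Δ (p * xf i) (p * xf i) ∈ S (p * xf i) := ⟨i, p, hp, rfl⟩
    rw [hzero] at hmem
    have hle : f (p * xf i) ≤ g i p := by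
      calc f (p * xf i) ≤ sInf (S (p * xf i)) := min_le_right _ _
        _ ≤ g i p + 0 := csInf_le (hSbddBelow _) hmem
        _ = g i p := by ring
    have hge : g i p ≤ f (p * xf i) := by
      apply le_min hg01.2
      apply le_csInf ⟨_, hmem⟩
      rintro b ⟨j, q, hq, rfl⟩
      have hq01 := (hgB j).1 q
      rcases eq_or_ne j i with rfl | hne
      · have : Δ (p * xf j) (q * xf j) = Δ p q := hinv p q (xf j)
        have hlip := hgi.2 p q
        rw [abs_sub_le_iff] at hlip
        rw [this]
        linarith [hlip.1]
      · have : r j i ∨ r i j := by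
          rcases lt_trichotomy (e j) (e i) with h | h | h
          · exact Or.inl h
          · exact absurd (e.injective h) hne
          · exact Or.inr h
        rcases this with hji | hij
        · have := hsep i j hji p hp q hq
          rw [hsymm] at this
          linarith
        · have := hsep j i hij q hq p hp
          linarith
    linarith
  refine ⟨f, hfB, fun U hU => ?_⟩
  set i : ι := ⟨U, hU⟩ with hi
  refine ⟨xf i, ?_⟩
  have hrB : rtrans (xf i) f ∈ BLip Δ := by
    constructor
    · intro z; exact hfB.1 (z * xf i)
    · intro z w
      have := hfB.2 (z * xf i) (w * xf i)
      rwa [hinv z w (xf i)] at this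
  exact hprop i (rtrans (xf i) f) hrB (fun z hz => hval i z hz)
end

section
/- Let G be a topological group and Δ a continuous right-invariant pseudometric on G such that d(Δ) = Δ♭(Δ) ≥ ℵ₀. Then there exists f ∈ BLip⁺(Δ) whose right orbit { x·f | x ∈ G } is dense in BLip⁺(Δ) in the topology of pointwise convergence; i.e., BLip⁺(Δ) equals the pointwise closure of the orbit of f. -/
open Cardinal Topology

universe u

lemma IsPseudometric.nonneg {G : Type u} {Δ : G → G → ℝ} (h : IsPseudometric Δ)
    (x y : G) : 0 ≤ Δ x y := by
  obtain ⟨h0, hs, ht⟩ := h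
  have := ht x y x
  rw [h0 x, hs y x] at this
  linarith

lemma blip_isClosed {G : Type u} (Δ : G → G → ℝ) : IsClosed (BLip Δ) := by
  have : BLip Δ =
      (⋂ x : G, (fun f : G → ℝ => f x) ⁻¹' Set.Icc 0 1) ∩
      ⋂ x : G, ⋂ y : G, {f : G → ℝ | |f x - f y| ≤ Δ x y} := by
    ext f
    simp only [BLip, Set.mem_setOf_eq, Set.mem_inter_iff, Set.mem_iInter, Set.mem_preimage,
      Set.mem_Icc]
  rw [this]
  refine IsClosed.inter (isClosed_iInter fun x => isClosed_Icc.preimage (continuous_apply x))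
    (isClosed_iInter fun x => isClosed_iInter fun y => ?_)
  have : {f : G → ℝ | |f x - f y| ≤ Δ x y} = (fun f : G → ℝ => |f x - f y|) ⁻¹' Set.Iic (Δ x y) :=
    rfl
  rw [this]
  exact isClosed_Iic.preimage (((continuous_apply x).sub (continuous_apply y)).abs)

lemma my_exists_rat_near {a δ : ℝ} (h0 : 0 ≤ a) (h1 : a ≤ 1) (hδ : 0 < δ) :
    ∃ q : ℚ, (0 ≤ q ∧ q ≤ 1) ∧ a - δ ≤ (q : ℝ) ∧ (q : ℝ) ≤ a := by
  rcases le_or_gt a δ with h | h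
  · exact ⟨0, ⟨le_refl 0, zero_le_one⟩, by push_cast; linarith, by exact_mod_cast h0⟩
  · obtain ⟨q, hq1, hq2⟩ := exists_rat_btwn (by linarith : a - δ < a)
    have hq0 : (0:ℝ) ≤ (q:ℝ) := by linarith
    refine ⟨q, ⟨by exact_mod_cast hq0, by exact_mod_cast le_trans hq2.le h1⟩, hq1.le, hq2.le⟩

lemma finset_eps {α : Type*} (s : Finset α) (P : α → ℝ → Prop)
    (hmono : ∀ a d d', 0 < d → d ≤ d' → P a d' → P a d)
    (h : ∀ a ∈ s, ∃ d, 0 < d ∧ P a d) :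
    ∃ d, 0 < d ∧ ∀ a ∈ s, P a d := by
  classical
  induction s using Finset.induction_on with
  | empty => exact ⟨1, one_pos, fun a ha => absurd ha (Finset.notMem_empty a)⟩
  | @insert a s ha ih =>
    obtain ⟨d, hd, hP⟩ := ih fun b hb => h b (Finset.mem_insert_of_mem hb)
    obtain ⟨d', hd', hP'⟩ := h a (Finset.mem_insert_self a s)
    refine ⟨min d d', lt_min hd hd', fun b hb => ?_⟩
    rcases Finset.mem_insert.mp hb with rfl | hb
    · exact hmono b _ d' (lt_min hd hd') (min_le_right _ _) hP'
    · exact hmono b _ d (lt_min hd hd') (min_le_left _ _) (hP b hb)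

/-- Transfinite construction of a separated family of translated finite sets. -/
lemma exists_sep_family {G : Type u} [Group G] {Δ : G → G → ℝ} (hpm : IsPseudometric Δ)
    {κ : Cardinal.{u}} (hflat : κ ≤ deltaFlat Δ) (hbig : ℵ₀ ≤ κ)
    {ι : Type u} (r : ι → ι → Prop) (wf : WellFounded r)
    (hseg : ∀ i : ι, #{j : ι // r j i} < κ) (F : ι → Finset G) :
    ∃ x : ι → G, ∀ i j, r j i → ∀ z ∈ F i, ∀ z' ∈ F j, 1 ≤ Δ (z * x i) (z' * x j) := by
  classical
  have key : ∀ (i : ι) (prev : ∀ j, r j i → G), ∃ x : G,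
      ∀ z ∈ F i, ∀ j, ∀ (h : r j i), ∀ z' ∈ F j, 1 ≤ Δ (z * x) (z' * prev j h) := by
    intro i prev
    set S : Set G := ⋃ j : {j : ι // r j i}, (fun z' : G => z' * prev j.1 j.2) '' ↑(F j.1) with hS
    have hScard : #S < κ := by
      by_cases hfin : Finite {j : ι // r j i}
      · have : S.Finite := Set.finite_iUnion fun j => (F j.1).finite_toSet.image _
        exact lt_of_lt_of_le this.lt_aleph0 hbig
      · have hinf : ℵ₀ ≤ #{j : ι // r j i} :=
          Cardinal.infinite_iff.mp (not_finite_iff_infinite.mp hfin)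
        calc #S ≤ #{j : ι // r j i} * ⨆ j : {j : ι // r j i},
              #((fun z' : G => z' * prev j.1 j.2) '' ↑(F j.1)) := Cardinal.mk_iUnion_le _
          _ ≤ #{j : ι // r j i} * ℵ₀ := by
              refine mul_le_mul_right (ciSup_le' fun j => ?_) _
              exact le_of_lt (((F j.1).finite_toSet.image _).lt_aleph0)
          _ = #{j : ι // r j i} := Cardinal.mul_aleph0_eq hinf
          _ < κ := hseg i
    by_contra hcon
    push_neg at hcon
    have hcov : ∀ x : G, ∃ q ∈ (↑(F i) : Set G), ∃ p ∈ S, Δ p (q * x) ≤ 1 := by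
      intro x
      obtain ⟨z, hz, j, hj, z', hz', hlt⟩ := hcon x
      refine ⟨z, hz, z' * prev j hj, ?_, ?_⟩
      · exact Set.mem_iUnion.mpr ⟨⟨j, hj⟩, Set.mem_image_of_mem _ hz'⟩
      · rw [hpm.2.1]; exact hlt.le
    have : deltaFlat Δ ≤ #S :=
      csInf_le' ⟨S, ⟨↑(F i), (F i).finite_toSet, hcov⟩, rfl⟩
    exact absurd (lt_of_le_of_lt (hflat.trans this) hScard) (lt_irrefl κ)
  let step : ∀ i : ι, (∀ j, r j i → G) → G := fun i prev => (key i prev).choose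
  let x : ι → G := wf.fix step
  have hx : ∀ i, x i = step i (fun j _ => x j) := fun i => wf.fix_eq step i
  refine ⟨x, fun i j hr z hz z' hz' => ?_⟩
  have hspec := (key i (fun j _ => x j)).choose_spec
  rw [hx i]
  exact hspec z hz j hr z' hz'

/-- Given a separated family of translated "tasks" (finite sets of point/value pairs),
the sup of tent functions realizes each task approximately. -/
lemma orbit_dense_of_tasks {G : Type u} [Group G] {Δ : G → G → ℝ}
    (hpm : IsPseudometric Δ) (hinv : RightInvariant Δ)
    {ι : Type u} (pt : ι → Finset (G × ℚ))
    (hval : ∀ i, ∀ p ∈ pt i, (0:ℚ) ≤ p.2 ∧ p.2 ≤ 1)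
    (x : ι → G)
    (hsep : ∀ i j, i ≠ j → ∀ p ∈ pt i, ∀ p' ∈ pt j, 1 ≤ Δ (p.1 * x i) (p'.1 * x j)) :
    ∃ f ∈ BLip Δ, ∀ i (g : G → ℝ), g ∈ BLip Δ → (∀ p ∈ pt i, (p.2 : ℝ) ≤ g p.1) →
      ∀ p ∈ pt i, (p.2 : ℝ) ≤ f (p.1 * x i) ∧ f (p.1 * x i) ≤ g p.1 := by
  classical
  set A : G → Set ℝ := fun y =>
    insert 0 {v : ℝ | ∃ i, ∃ p ∈ pt i, v = (p.2 : ℝ) - Δ y (p.1 * x i)} with hA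
  set f : G → ℝ := fun y => sSup (A y) with hf
  have hAne : ∀ y, (A y).Nonempty := fun y => ⟨0, Set.mem_insert _ _⟩
  have hub : ∀ y, ∀ v ∈ A y, v ≤ 1 := by
    intro y v hv
    rcases Set.mem_insert_iff.mp hv with rfl | ⟨i, p, hp, rfl⟩
    · exact zero_le_one
    · have h1 : (p.2 : ℝ) ≤ 1 := by exact_mod_cast (hval i p hp).2
      have h2 : 0 ≤ Δ y (p.1 * x i) := hpm.nonneg _ _
      linarith
  have hbdd : ∀ y, BddAbove (A y) := fun y => ⟨1, fun v hv => hub y v hv⟩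
  have hf0 : ∀ y, 0 ≤ f y := fun y => le_csSup (hbdd y) (Set.mem_insert _ _)
  have hf1 : ∀ y, f y ≤ 1 := fun y => csSup_le (hAne y) (hub y)
  have hflip : ∀ y y', f y ≤ f y' + Δ y y' := by
    intro y y'
    refine csSup_le (hAne y) ?_
    intro v hv
    rcases Set.mem_insert_iff.mp hv with rfl | ⟨i, p, hp, rfl⟩
    · have := hf0 y'
      have := hpm.nonneg y y'
      linarith
    · have hmem : (p.2 : ℝ) - Δ y' (p.1 * x i) ∈ A y' :=
        Set.mem_insert_iff.mpr (Or.inr ⟨i, p, hp, rfl⟩)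
      have h1 : (p.2 : ℝ) - Δ y' (p.1 * x i) ≤ f y' := le_csSup (hbdd y') hmem
      have h2 : Δ y' (p.1 * x i) ≤ Δ y' y + Δ y (p.1 * x i) := hpm.2.2 _ _ _
      have h3 : Δ y' y = Δ y y' := hpm.2.1 _ _
      linarith
  have hlip : ∀ y y', |f y - f y'| ≤ Δ y y' := by
    intro y y'
    rw [abs_sub_le_iff]
    constructor
    · have := hflip y y'; linarith
    · have := hflip y' y; rw [hpm.2.1 y' y] at this; linarith
  refine ⟨f, ⟨fun y => ⟨hf0 y, hf1 y⟩, hlip⟩, ?_⟩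
  intro i g hg hcond p hp
  constructor
  · have hmem : (p.2 : ℝ) - Δ (p.1 * x i) (p.1 * x i) ∈ A (p.1 * x i) :=
      Set.mem_insert_iff.mpr (Or.inr ⟨i, p, hp, rfl⟩)
    have h0 : Δ (p.1 * x i) (p.1 * x i) = 0 := hpm.1 _
    rw [h0, sub_zero] at hmem
    exact le_csSup (hbdd _) hmem
  · refine csSup_le (hAne _) ?_
    intro v hv
    have hgp0 : 0 ≤ g p.1 := (hg.1 p.1).1
    rcases Set.mem_insert_iff.mp hv with rfl | ⟨j, p', hp', rfl⟩
    · exact hgp0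
    · rcases eq_or_ne j i with rfl | hne
      · have heq : Δ (p.1 * x j) (p'.1 * x j) = Δ p.1 p'.1 := hinv _ _ _
        rw [heq]
        have h1 : (p'.2 : ℝ) ≤ g p'.1 := hcond p' hp'
        have h2 : |g p'.1 - g p.1| ≤ Δ p'.1 p.1 := hg.2 _ _
        have h3 : Δ p'.1 p.1 = Δ p.1 p'.1 := hpm.2.1 _ _
        have h4 : g p'.1 - g p.1 ≤ Δ p.1 p'.1 := by
          rw [← h3]; exact (abs_le.mp h2).2.trans_eq rfl
        linarith
      · have hsep1 : 1 ≤ Δ (p.1 * x i) (p'.1 * x j) := hsep i j hne.symm p hp p' hp'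
        have h1 : (p'.2 : ℝ) ≤ 1 := by exact_mod_cast (hval j p' hp').2
        linarith

/-- if `d(Δ) = Δ♭(Δ) ≥ ℵ₀` then `BLip⁺(Δ)` is the pointwise closure of
the right orbit of one of its elements. -/
theorem BLip_eq_orbit_closure {G : Type u} [Group G] [TopologicalSpace G]
    [IsTopologicalGroup G] (Δ : G → G → ℝ) (hΔ : IsCRIP Δ)
    (heq : dDens Δ = deltaFlat Δ) (hbig : Cardinal.aleph0 ≤ dDens Δ) :
    ∃ f ∈ BLip Δ, BLip Δ = closure (rorbit f) := by
  classical
  obtain ⟨hpm, hinv, -⟩ := hΔ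
  set κ := dDens Δ with hκ
  -- a Δ-dense set of minimal cardinality
  have hne : {c | ∃ H : Set G, (∀ x : G, ∀ ε : ℝ, 0 < ε → ∃ h ∈ H, Δ x h < ε) ∧
      c = Cardinal.mk H}.Nonempty :=
    ⟨#(Set.univ : Set G), Set.univ,
      fun x ε hε => ⟨x, Set.mem_univ x, by rw [hpm.1 x]; exact hε⟩, rfl⟩
  obtain ⟨H, hHdense, hHcard⟩ := csInf_mem hne
  have hHbig : ℵ₀ ≤ #(↥H) := hHcard ▸ hbig
  haveI hHinf : Infinite ↥H := Cardinal.infinite_iff.mpr hHbig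
  -- the index type of tasks
  haveI : Nonempty {q : ℚ // 0 ≤ q ∧ q ≤ 1} := ⟨⟨0, le_refl 0, zero_le_one⟩⟩
  haveI : Infinite (↥H × {q : ℚ // 0 ≤ q ∧ q ≤ 1}) :=
    Infinite.of_injective (fun h => (h, Classical.arbitrary _))
      (fun a b hab => congrArg Prod.fst hab)
  set T := Finset (↥H × {q : ℚ // 0 ≤ q ∧ q ≤ 1}) with hT
  have hTcard : #T ≤ κ := by
    rw [hT, Cardinal.mk_finset_of_infinite, Cardinal.mk_prod]
    have h1 : Cardinal.lift.{0} #(↥H) = #(↥H) := Cardinal.lift_id'.{0,u} _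
    have h2 : Cardinal.lift.{u} #({q : ℚ // 0 ≤ q ∧ q ≤ 1}) ≤ ℵ₀ := by
      have : #({q : ℚ // 0 ≤ q ∧ q ≤ 1}) ≤ ℵ₀ := Cardinal.mk_le_aleph0
      calc Cardinal.lift.{u} #({q : ℚ // 0 ≤ q ∧ q ≤ 1}) ≤ Cardinal.lift.{u} ℵ₀ :=
            Cardinal.lift_le.mpr this
        _ = ℵ₀ := Cardinal.lift_aleph0
    calc Cardinal.lift.{0} #(↥H) * Cardinal.lift.{u} #({q : ℚ // 0 ≤ q ∧ q ≤ 1})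
        ≤ #(↥H) * ℵ₀ := by rw [h1]; exact mul_le_mul_right h2 _
      _ = #(↥H) := Cardinal.mul_aleph0_eq hHbig
      _ = κ := hHcard.symm
  -- embed tasks into the ordinal κ.ord
  have hTle : #T ≤ #(κ.ord.ToType) := by
    rw [Cardinal.mk_toType, Cardinal.card_ord]; exact hTcard
  obtain ⟨e⟩ := Cardinal.le_def _ _ |>.mp hTle
  set r : T → T → Prop := fun a b => e a < e b with hr
  have wf : WellFounded r := InvImage.wf (fun a => e a) (IsWellFounded.wf)
  have hseg : ∀ i : T, #{j : T // r j i} < κ := by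
    intro i
    have hinj : Function.Injective
        (fun j : {j : T // r j i} => (⟨e j.1, j.2⟩ : Set.Iio (e i))) := by
      intro a b hab
      have : e a.1 = e b.1 := congrArg Subtype.val hab
      exact Subtype.ext (e.injective this)
    exact lt_of_le_of_lt (Cardinal.mk_le_of_injective hinj)
      (Cardinal.mk_Iio_toType_ord_lt (e i))
  -- tasks as point/value pairs in G × ℚ
  set pt : T → Finset (G × ℚ) :=
    fun t => t.image (fun p => ((p.1.1 : G), (p.2.1 : ℚ))) with hpt
  set F : T → Finset G := fun t => (pt t).image Prod.fst with hF
  -- the separated family of translates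
  obtain ⟨x, hsepx⟩ := exists_sep_family hpm (heq.le) hbig r wf hseg F
  have hsep : ∀ i j, i ≠ j → ∀ p ∈ pt i, ∀ p' ∈ pt j,
      1 ≤ Δ (p.1 * x i) (p'.1 * x j) := by
    intro i j hij p hp p' hp'
    have hpF : p.1 ∈ F i := Finset.mem_image_of_mem _ hp
    have hpF' : p'.1 ∈ F j := Finset.mem_image_of_mem _ hp'
    rcases lt_or_gt_of_ne (fun h : e i = e j => hij (e.injective h)) with h | h
    · have := hsepx j i h p'.1 hpF' p.1 hpF
      rwa [hpm.2.1] at this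
    · exact hsepx i j h p.1 hpF p'.1 hpF'
  have hval : ∀ i : T, ∀ p ∈ pt i, (0:ℚ) ≤ p.2 ∧ p.2 ≤ 1 := by
    intro i p hp
    obtain ⟨a, _, rfl⟩ := Finset.mem_image.mp hp
    exact a.2.2
  obtain ⟨f, hfB, heval⟩ := orbit_dense_of_tasks hpm hinv pt hval x hsep
  refine ⟨f, hfB, ?_⟩
  apply Set.Subset.antisymm
  · -- BLip ⊆ closure of orbit
    intro g hg
    rw [mem_closure_iff_nhds]
    intro N hN
    rw [nhds_pi] at hN
    obtain ⟨I, U, hU, hsub⟩ := Filter.mem_pi'.mp hN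
    -- a uniform ε for the finitely many coordinates
    obtain ⟨ε, hε, hball⟩ := finset_eps I (fun z d => Metric.ball (g z) d ⊆ U z)
      (fun a d d' hd hdd' hP => (Metric.ball_subset_ball hdd').trans hP)
      (fun z _ => by
        obtain ⟨d, hd, hdsub⟩ := Metric.mem_nhds_iff.mp (hU z)
        exact ⟨d, hd, hdsub⟩)
    have hε3 : 0 < ε / 3 := by linarith
    -- choose approximating data for each coordinate
    have hchoice : ∀ z : {z // z ∈ I}, ∃ p : ↥H × {q : ℚ // 0 ≤ q ∧ q ≤ 1},
        Δ z.1 (p.1 : G) < ε / 3 ∧ g (p.1 : G) - ε / 3 ≤ (p.2.1 : ℝ) ∧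
        ((p.2.1 : ℚ) : ℝ) ≤ g (p.1 : G) := by
      intro z
      obtain ⟨w, hwH, hwd⟩ := hHdense z.1 (ε / 3) hε3
      obtain ⟨q, hq01, hq1, hq2⟩ :=
        my_exists_rat_near (hg.1 w).1 (hg.1 w).2 hε3
      exact ⟨(⟨w, hwH⟩, ⟨q, hq01⟩), hwd, hq1, hq2⟩
    choose ψ hψ using hchoice
    set t : T := I.attach.image ψ with ht
    have hgcond : ∀ p ∈ pt t, (p.2 : ℝ) ≤ g p.1 := by
      intro p hp
      obtain ⟨a, ha, rfl⟩ := Finset.mem_image.mp hp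
      obtain ⟨z, _, rfl⟩ := Finset.mem_image.mp ha
      exact (hψ z).2.2
    refine ⟨rtrans (x t) f, hsub ?_, ⟨x t, rfl⟩⟩
    intro z hz
    set w : G := ((ψ ⟨z, hz⟩).1 : G) with hw
    set q : ℚ := ((ψ ⟨z, hz⟩).2 : ℚ) with hq
    have hpmem : ((w, q) : G × ℚ) ∈ pt t := by
      refine Finset.mem_image.mpr ⟨ψ ⟨z, hz⟩, ?_, rfl⟩
      exact Finset.mem_image.mpr ⟨⟨z, hz⟩, Finset.mem_attach _ _, rfl⟩
    have hkey := heval t g hg hgcond (w, q) hpmem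
    have h1 : |f (z * x t) - f (w * x t)| ≤ Δ z w := by
      have := hfB.2 (z * x t) (w * x t)
      rwa [hinv z w (x t)] at this
    have h2 : Δ z w < ε / 3 := (hψ ⟨z, hz⟩).1
    have h3 : g w - ε / 3 ≤ (q : ℝ) := (hψ ⟨z, hz⟩).2.1
    have h4 : (q : ℝ) ≤ f (w * x t) := hkey.1
    have h5 : f (w * x t) ≤ g w := hkey.2
    have h6 : |g w - g z| ≤ Δ z w := by
      have := hg.2 w z
      rwa [hpm.2.1 w z] at this
    apply hball z hz
    rw [Metric.mem_ball, Real.dist_eq]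
    have ha1 := (abs_le.mp h1).1
    have ha2 := (abs_le.mp h1).2
    have hb1 := (abs_le.mp h6).1
    have hb2 := (abs_le.mp h6).2
    show |f (z * x t) - g z| < ε
    rw [abs_lt]
    constructor <;> linarith
  · -- closure of orbit ⊆ BLip
    refine closure_minimal ?_ (blip_isClosed Δ)
    rintro g ⟨a, rfl⟩
    refine ⟨fun z => hfB.1 (z * a), fun z y => ?_⟩
    have := hfB.2 (z * a) (y * a)
    rwa [hinv z y a] at this
end

section
/- If G is the additive group of an infinite-dimensional (or more generally infinite) normed space with the norm topology, then G is ambitable: for every continuous (translation-)invariant pseudometric Δ' on G there exists a bounded uniformly continuous function f on G whose pointwise orbit closure contains BLip⁺(Δ'). -/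
open Cardinal Topology

universe u

/-- Translation invariance of a pseudometric on an additive group. -/
def AddInvariant {E : Type u} [AddGroup E] (Δ : E → E → ℝ) : Prop :=
  ∀ z z' x, Δ (z + x) (z' + x) = Δ z z'

set_option linter.unusedSectionVars false
set_option linter.unusedVariables false
set_option maxHeartbeats 1000000

namespace NSA


lemma exists_sep {E : Type u} [NormedAddCommGroup E] :
    ∃ S : Set E, (∀ s ∈ S, ∀ t ∈ S, s ≠ t → 1 ≤ ‖s - t‖) ∧
      (∀ x : E, ∃ s ∈ S, ‖x - s‖ < 1) := by
  have hchainub : ∀ c ⊆ {S : Set E | ∀ s ∈ S, ∀ t ∈ S, s ≠ t → 1 ≤ ‖s - t‖},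
      IsChain (fun x1 x2 => x1 ⊆ x2) c →
      ∃ ub ∈ {S : Set E | ∀ s ∈ S, ∀ t ∈ S, s ≠ t → 1 ≤ ‖s - t‖}, ∀ s ∈ c, s ⊆ ub := by
    intro c hc hchain
    refine ⟨⋃₀ c, ?_, fun s hs => Set.subset_sUnion_of_mem hs⟩
    intro s hs t ht hst
    obtain ⟨A, hA, hsA⟩ := hs
    obtain ⟨B, hB, htB⟩ := ht
    rcases hchain.total hA hB with h | h
    · exact hc hB s (h hsA) t htB hst
    · exact hc hA s hsA t (h htB) hst
  obtain ⟨S, hS⟩ := zorn_subset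
    {S : Set E | ∀ s ∈ S, ∀ t ∈ S, s ≠ t → 1 ≤ ‖s - t‖} hchainub
  refine ⟨S, hS.prop, ?_⟩
  intro x
  by_contra hx
  push_neg at hx
  have hxS : x ∉ S := fun h => by have := hx x h; rw [sub_self, norm_zero] at this; linarith
  have hmem : insert x S ∈ {S : Set E | ∀ s ∈ S, ∀ t ∈ S, s ≠ t → 1 ≤ ‖s - t‖} := by
    intro s hs t ht hst
    rcases hs with rfl | hs
    · rcases ht with rfl | ht
      · exact absurd rfl hst
      · exact hx t ht
    · rcases ht with rfl | ht
      · rw [norm_sub_rev]; exact hx s hs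
      · exact hS.prop s hs t ht hst
  have := hS.2 hmem (Set.subset_insert x S)
  exact hxS (this (Set.mem_insert x S))

lemma embed_lemma {E : Type u} (S D : Set E) (hS : S.Infinite) (hne : D.Nonempty)
    (f : ↥S × ℕ → ↥D) (hf : Function.Surjective f) :
    Nonempty (Finset (↥D × ℚ) ↪ ↥S) := by
  haveI : Infinite ↥S := hS.to_subtype
  haveI : Nonempty ↥D := hne.to_subtype
  haveI : Infinite (↥D × ℚ) := Prod.infinite_of_right
  rw [← Cardinal.le_def, Cardinal.mk_finset_of_infinite]
  have h1 : #(↥S × ℕ) = #↥S := by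
    rw [Cardinal.mk_prod]
    rw [Cardinal.mk_denumerable ℕ, Cardinal.lift_aleph0]; simp only [Cardinal.lift_id']
    exact Cardinal.mul_aleph0_eq (Cardinal.aleph0_le_mk _)
  have h2 : #↥D ≤ #↥S := by
    have := Cardinal.mk_le_of_surjective hf
    rwa [h1] at this
  have h3 : #(↥D × ℚ) = #↥D * ℵ₀ := by
    rw [Cardinal.mk_prod, Cardinal.mk_denumerable ℚ, Cardinal.lift_aleph0]
    simp only [Cardinal.lift_id']
  rw [h3]
  calc #↥D * ℵ₀ ≤ #↥S * ℵ₀ := mul_le_mul_left h2 _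
    _ = #↥S := Cardinal.mul_aleph0_eq (Cardinal.aleph0_le_mk _)


noncomputable def Hh (w : ℕ → ℝ) (n : ℕ) : ℝ := ∑ i ∈ Finset.range n, (w i + w (i+1))

lemma Hh_gap (w : ℕ → ℝ) (hw : ∀ i, 0 ≤ w i) {m n : ℕ} (h : m < n) :
    w m + w n ≤ Hh w n - Hh w m := by
  have hsub : Hh w n - Hh w m = ∑ i ∈ Finset.Ico m n, (w i + w (i+1)) := by
    rw [Finset.sum_Ico_eq_sub _ h.le]; rfl
  rw [hsub, Finset.sum_add_distrib]
  have h1 : w m ≤ ∑ i ∈ Finset.Ico m n, w i :=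
    Finset.single_le_sum (fun i _ => hw i) (Finset.mem_Ico.2 ⟨le_rfl, h⟩)
  have h2 : w n ≤ ∑ i ∈ Finset.Ico m n, w (i+1) := by
    have hn : n - 1 ∈ Finset.Ico m n := by
      refine Finset.mem_Ico.2 ⟨?_, ?_⟩ <;> omega
    have := Finset.single_le_sum (f := fun i => w (i+1)) (fun i _ => hw _) hn
    have heq : n - 1 + 1 = n := by omega
    rwa [heq] at this
  linarith


noncomputable section

variable {E : Type u} [NormedAddCommGroup E] [NormedSpace ℝ E]

def clipq (q : ℚ) : ℝ := max 0 (min 1 (q:ℝ))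

lemma clipq_nonneg (q : ℚ) : 0 ≤ clipq q := le_max_left _ _

lemma clipq_close {r e : ℝ} {q : ℚ} (h0 : 0 ≤ r) (h1 : r ≤ 1) (h : |r - (q:ℝ)| ≤ e) :
    |clipq q - r| ≤ e := by
  rw [abs_le] at h ⊢
  refine ⟨?_, ?_⟩
  · have hq : r - e ≤ (q:ℝ) := by linarith [h.2]
    have h2 : r - e ≤ min 1 (q:ℝ) := le_min (by linarith) hq
    have h3 : r - e ≤ clipq q := h2.trans (le_max_right _ _)
    linarith
  · have hq : (q:ℝ) ≤ r + e := by linarith [h.1]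
    have h2 : min 1 (q:ℝ) ≤ r + e := (min_le_right _ _).trans hq
    have h3 : clipq q ≤ r + e := max_le (by linarith [abs_nonneg (r - (q:ℝ))]) h2
    linarith

variable (ρ : E → ℝ) {D : Set E}

def Rad (P : Finset (↥D × ℚ)) : ℝ := 1 + ((P.sup fun a => ‖(a.1 : E)‖₊ : NNReal) : ℝ)

lemma one_le_Rad (P : Finset (↥D × ℚ)) : 1 ≤ Rad P := by
  have : (0:ℝ) ≤ ((P.sup fun a => ‖(a.1 : E)‖₊ : NNReal) : ℝ) := NNReal.coe_nonneg _
  unfold Rad; linarith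

lemma norm_le_Rad {P : Finset (↥D × ℚ)} {a : ↥D × ℚ} (ha : a ∈ P) :
    ‖(a.1 : E)‖ + 1 ≤ Rad P := by
  have h := Finset.le_sup (f := fun a : ↥D × ℚ => ‖(a.1 : E)‖₊) ha
  have h' : (‖(a.1 : E)‖₊ : ℝ) ≤ ((P.sup fun a => ‖(a.1 : E)‖₊ : NNReal) : ℝ) :=
    NNReal.coe_le_coe.2 h
  rw [coe_nnnorm] at h'
  unfold Rad; linarith

variable (ctr : Finset (↥D × ℚ) → E)

def blk (P : Finset (↥D × ℚ)) (y : E) : ℝ :=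
  if h : P.Nonempty then
    max 0 (min (P.inf' h fun a => min 1 (clipq a.2 + ρ (y - ctr P - (a.1 : E))))
      (Rad P + 1 - ‖y - ctr P‖))
  else 0

lemma blk_nonneg (P : Finset (↥D × ℚ)) (y : E) : 0 ≤ blk ρ ctr P y := by
  unfold blk; split <;> simp

lemma blk_le_one (P : Finset (↥D × ℚ)) (y : E) : blk ρ ctr P y ≤ 1 := by
  unfold blk
  split
  · rename_i h
    refine max_le zero_le_one ((min_le_left _ _).trans ?_)
    obtain ⟨a, ha, hEq⟩ := Finset.exists_mem_eq_inf' h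
      (fun a => min 1 (clipq a.2 + ρ (y - ctr P - (a.1 : E))))
    rw [hEq]; exact min_le_left _ _
  · exact zero_le_one

lemma blk_eq_zero {P : Finset (↥D × ℚ)} {y : E} (h : Rad P + 1 ≤ ‖y - ctr P‖) :
    blk ρ ctr P y = 0 := by
  unfold blk
  split
  · exact max_eq_left ((min_le_right _ _).trans (by linarith))
  · rfl

lemma blk_le (hρ0 : ∀ u, 0 ≤ ρ u) (hρd : ∀ a b, |ρ a - ρ b| ≤ ρ (a - b))
    (P : Finset (↥D × ℚ)) (y y' : E) :
    blk ρ ctr P y ≤ blk ρ ctr P y' + (ρ (y - y') + ‖y - y'‖) := by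
  have hM : 0 ≤ ρ (y - y') + ‖y - y'‖ := add_nonneg (hρ0 _) (norm_nonneg _)
  unfold blk
  split
  · rename_i h
    set M := ρ (y - y') + ‖y - y'‖ with hMdef
    refine max_le (by positivity) ?_
    have hA : (P.inf' h fun a => min 1 (clipq a.2 + ρ (y - ctr P - (a.1 : E)))) ≤
        (P.inf' h fun a => min 1 (clipq a.2 + ρ (y' - ctr P - (a.1 : E)))) + M := by
      obtain ⟨a, ha, hEq⟩ := Finset.exists_mem_eq_inf' h
        (fun a => min 1 (clipq a.2 + ρ (y' - ctr P - (a.1 : E))))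
      rw [hEq]
      refine (Finset.inf'_le _ ha).trans ?_
      have hd : ρ (y - ctr P - (a.1 : E)) ≤ ρ (y' - ctr P - (a.1 : E)) + M := by
        have h1 := (abs_le.1 (hρd (y - ctr P - (a.1 : E)) (y' - ctr P - (a.1 : E)))).2
        have h2 : y - ctr P - (a.1 : E) - (y' - ctr P - (a.1 : E)) = y - y' := by abel
        rw [h2] at h1
        have := norm_nonneg (y - y')
        rw [hMdef]; linarith
      rw [← min_add_add_right]
      exact min_le_min (by linarith) (by linarith)
    have hT : Rad P + 1 - ‖y - ctr P‖ ≤ (Rad P + 1 - ‖y' - ctr P‖) + M := by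
      have h1 : ‖y' - ctr P‖ - ‖y - ctr P‖ ≤ ‖y' - y‖ := by
        have := norm_sub_norm_le (y' - ctr P) (y - ctr P)
        have h2 : y' - ctr P - (y - ctr P) = y' - y := by abel
        rwa [h2] at this
      have h1' : ‖y' - y‖ = ‖y - y'‖ := norm_sub_rev _ _
      have := hρ0 (y - y')
      rw [hMdef]; linarith
    have hmin : min (P.inf' h fun a => min 1 (clipq a.2 + ρ (y - ctr P - (a.1 : E))))
        (Rad P + 1 - ‖y - ctr P‖) ≤ min (P.inf' h fun a => min 1 (clipq a.2 + ρ (y' - ctr P - (a.1 : E))))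
        (Rad P + 1 - ‖y' - ctr P‖) + M := by
      rw [← min_add_add_right]
      exact min_le_min hA hT
    exact hmin.trans (add_le_add_left (le_max_right _ _) M)
  · positivity

def FF : E → ℝ := fun y => ⨆ P : Finset (↥D × ℚ), blk ρ ctr P y

lemma FF_bdd (y : E) : BddAbove (Set.range fun P : Finset (↥D × ℚ) => blk ρ ctr P y) := by
  refine ⟨1, ?_⟩
  rintro r ⟨P, rfl⟩
  exact blk_le_one ρ ctr P y

lemma blk_le_FF (P : Finset (↥D × ℚ)) (y : E) : blk ρ ctr P y ≤ FF ρ ctr y :=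
  le_ciSup (FF_bdd ρ ctr y) P

lemma FF_nonneg (y : E) : 0 ≤ FF ρ ctr y :=
  (blk_nonneg ρ ctr ∅ y).trans (blk_le_FF ρ ctr ∅ y)

lemma FF_le_one (y : E) : FF ρ ctr y ≤ 1 :=
  ciSup_le fun P => blk_le_one ρ ctr P y

lemma FF_le (hρ0 : ∀ u, 0 ≤ ρ u) (hρd : ∀ a b, |ρ a - ρ b| ≤ ρ (a - b)) (y y' : E) :
    FF ρ ctr y ≤ FF ρ ctr y' + (ρ (y - y') + ‖y - y'‖) :=
  ciSup_le fun P => (blk_le ρ ctr hρ0 hρd P y y').trans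
    (add_le_add_left (blk_le_FF ρ ctr P y') _)

lemma FF_eq_blk (hsep : ∀ P Q : Finset (↥D × ℚ), P ≠ Q → Rad P + Rad Q + 3 ≤ ‖ctr P - ctr Q‖)
    {P : Finset (↥D × ℚ)} {y : E} (hy : ‖y - ctr P‖ ≤ Rad P + 1) :
    FF ρ ctr y = blk ρ ctr P y := by
  refine le_antisymm (ciSup_le fun Q => ?_) (blk_le_FF ρ ctr P y)
  rcases eq_or_ne Q P with rfl | hQP
  · exact le_rfl
  · have h1 : Rad Q + Rad P + 3 ≤ ‖ctr Q - ctr P‖ := hsep Q P hQP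
    have h2 : ‖ctr Q - ctr P‖ ≤ ‖y - ctr Q‖ + ‖y - ctr P‖ := by
      have := norm_sub_le (y - ctr Q) (y - ctr P)
      have h3 : y - ctr Q - (y - ctr P) = ctr P - ctr Q := by abel
      rw [h3] at this
      rw [norm_sub_rev]
      linarith [this]
    have h4 : Rad Q + 1 ≤ ‖y - ctr Q‖ := by
      have := one_le_Rad (D := D) P
      linarith
    rw [blk_eq_zero ρ ctr h4]
    exact blk_nonneg ρ ctr P y

lemma approx (hρ0 : ∀ u, 0 ≤ ρ u)
    (hD : ∀ x : E, ∀ δ : ℝ, 0 < δ → ∃ d ∈ D, ‖x - d‖ < δ)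
    (g : E → ℝ) (hg1 : ∀ z, 0 ≤ g z ∧ g z ≤ 1) (hg2 : ∀ x z, |g x - g z| ≤ ρ (x - z))
    (F : Finset E) {ε : ℝ} (hε : 0 < ε)
    {δ₁ : ℝ} (hδ₁ : 0 < δ₁) (hρc : ∀ u : E, ‖u‖ < δ₁ → ρ u < ε / 4) :
    ∃ P : Finset (↥D × ℚ), ∀ z ∈ F,
      ‖z‖ ≤ Rad P ∧ |blk ρ ctr P (z + ctr P) - g z| < ε := by
  classical
  set ε' := ε / 4 with hε'def
  have hε' : 0 < ε' := by positivity
  have hδ'' : 0 < min δ₁ 1 := lt_min hδ₁ one_pos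
  -- choose net points
  have hdz : ∀ z : E, ∃ d : ↥D, ‖z - (d : E)‖ < min δ₁ 1 := by
    intro z
    obtain ⟨d, hd, hd2⟩ := hD z _ hδ''
    exact ⟨⟨d, hd⟩, hd2⟩
  choose d hd using hdz
  -- choose rational values
  have hqz : ∀ r : ℝ, ∃ q : ℚ, |r - (q:ℝ)| < ε' := fun r => exists_rat_near r hε'
  choose q hq using hqz
  refine ⟨F.image fun z => (d z, q (g (d z))), ?_⟩
  intro z hz
  set P := F.image fun z => (d z, q (g (d z))) with hPdef
  have haz : (d z, q (g (d z))) ∈ P := Finset.mem_image_of_mem _ hz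
  have hP : P.Nonempty := ⟨_, haz⟩
  have hzd : ‖z - (d z : E)‖ < 1 := (hd z).trans_le (min_le_right _ _)
  have hzρ : ρ (z - (d z : E)) < ε' := hρc _ ((hd z).trans_le (min_le_left _ _))
  have hznorm : ‖z‖ ≤ Rad P := by
    have h1 := norm_le_Rad (P := P) haz
    have h2 : ‖z‖ ≤ ‖(d z : E)‖ + ‖z - (d z : E)‖ := by
      have := norm_add_le ((d z : E)) (z - (d z : E))
      simpa using this
    simp only at h1
    linarith
  refine ⟨hznorm, ?_⟩
  -- clip bounds
  have hclip : ∀ w : E, |clipq (q (g (d w))) - g (d w)| ≤ ε' :=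
    fun w => clipq_close (hg1 _).1 (hg1 _).2 (hq _).le
  -- compute the block
  rw [blk, dif_pos hP]
  have hyc : z + ctr P - ctr P = z := add_sub_cancel_right z _
  rw [hyc]
  set A := P.inf' hP fun a => min 1 (clipq a.2 + ρ (z - (a.1 : E))) with hAdef
  -- lower bound for A
  have hAlow : g z - ε' ≤ A := by
    refine Finset.le_inf' _ _ ?_
    intro a ha
    obtain ⟨w, hw, hwa⟩ := Finset.mem_image.1 ha
    refine le_min (by linarith [(hg1 z).2]) ?_
    have h1 : g z - g (d w) ≤ ρ (z - (d w : E)) :=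
      (le_abs_self _).trans (hg2 z (d w))
    have h2 : g (d w) - ε' ≤ clipq (q (g (d w))) := by
      have := abs_le.1 (hclip w); linarith [this.1]
    rw [← hwa]
    simp only
    linarith
  -- upper bound for A
  have hAup : A ≤ g z + 3 * ε' := by
    have h1 : A ≤ min 1 (clipq (q (g (d z))) + ρ (z - (d z : E))) :=
      Finset.inf'_le _ haz
    have h2 : clipq (q (g (d z))) ≤ g (d z) + ε' := by
      have := abs_le.1 (hclip z); linarith [this.2]
    have h3 : g (d z) - g z ≤ ρ (z - (d z : E)) := by
      have := (abs_sub_comm (g z) (g (d z))) ▸ hg2 z (d z)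
      exact (le_abs_self _).trans ((abs_sub_comm (g (d z)) (g z)) ▸ hg2 z (d z))
    have h4 : min 1 (clipq (q (g (d z))) + ρ (z - (d z : E))) ≤
        clipq (q (g (d z))) + ρ (z - (d z : E)) := min_le_right _ _
    linarith
  have hA1 : A ≤ 1 := (Finset.inf'_le _ haz).trans (min_le_left _ _)
  have hA0 : 0 ≤ A := by
    refine Finset.le_inf' _ _ ?_
    intro a ha
    exact le_min zero_le_one (add_nonneg (clipq_nonneg _) (hρ0 _))
  have hT : A ≤ Rad P + 1 - ‖z‖ := by linarith
  rw [min_eq_left hT, max_eq_right hA0]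
  rw [abs_lt]
  constructor <;> [skip; skip] <;> rw [hε'def] at hAlow hAup <;> linarith

end

end NSA

/-- the additive group of an infinite normed space is ambitable: every
`BLip⁺(Δ')` for a continuous invariant pseudometric `Δ'` is contained in the pointwise
orbit closure of some bounded uniformly continuous function. -/
theorem normed_space_ambitable {E : Type u} [NormedAddCommGroup E] [NormedSpace ℝ E]
    [Infinite E] :
    ∀ Δ' : E → E → ℝ, IsPseudometric Δ' → AddInvariant Δ' →
      (Continuous fun p : E × E => Δ' p.1 p.2) →
      ∃ f : E → ℝ, (∃ C : ℝ, ∀ x, |f x| ≤ C) ∧ UniformContinuous f ∧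
        BLip Δ' ⊆ closure {g : E → ℝ | ∃ x : E, g = fun z => f (z + x)} := by
  classical
  intro Δ' hpm hinv hcont
  obtain ⟨hzero, hsymm, htri⟩ := hpm
  set ρ : E → ℝ := fun u => Δ' u 0 with hρdef
  have hρeq : ∀ x y : E, Δ' x y = ρ (x - y) := by
    intro x y
    have h := hinv (x - y) 0 y
    rw [sub_add_cancel, zero_add] at h
    exact h
  have hρ0 : ∀ u : E, 0 ≤ ρ u := by
    intro u
    have h1 := htri u 0 u
    have h2 := hzero u
    have h3 := hsymm 0 u
    simp only [hρdef] at *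
    linarith
  have hρsymm : ∀ u : E, ρ (-u) = ρ u := by
    intro u
    have h1 := hinv (-u) 0 u
    rw [neg_add_cancel, zero_add] at h1
    have h2 := hsymm 0 u
    simp only [hρdef]
    rw [← h1, h2]
  have hρtri : ∀ u w : E, ρ (u + w) ≤ ρ u + ρ w := by
    intro u w
    have h1 := htri (u + w) w 0
    have h2 : Δ' (u + w) w = ρ u := by rw [hρeq, add_sub_cancel_right]
    simp only [hρdef] at *
    linarith
  have hρd : ∀ a b : E, |ρ a - ρ b| ≤ ρ (a - b) := by
    intro a b
    rw [abs_le]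
    constructor
    · have h1 : ρ b ≤ ρ (b - a) + ρ a := by
        have := hρtri (b - a) a
        rwa [sub_add_cancel] at this
      have h2 : ρ (b - a) = ρ (a - b) := by rw [← neg_sub a b, hρsymm]
      linarith
    · have h1 : ρ a ≤ ρ (a - b) + ρ b := by
        have := hρtri (a - b) b
        rwa [sub_add_cancel] at this
      linarith
  have hρc : ∀ ε : ℝ, 0 < ε → ∃ δ : ℝ, 0 < δ ∧ ∀ u : E, ‖u‖ < δ → ρ u < ε := by
    intro ε hε
    have hc : Continuous ρ := by
      have : ρ = (fun p : E × E => Δ' p.1 p.2) ∘ fun u : E => (u, (0:E)) := rfl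
      rw [this]
      exact hcont.comp (continuous_id.prodMk continuous_const)
    have hca := hc.continuousAt (x := (0:E))
    rw [Metric.continuousAt_iff] at hca
    obtain ⟨δ, hδ, hδ'⟩ := hca ε hε
    refine ⟨δ, hδ, fun u hu => ?_⟩
    have h0 : ρ (0:E) = 0 := hzero 0
    have := hδ' (x := u) (by rwa [dist_eq_norm, sub_zero])
    rw [Real.dist_eq, h0, sub_zero] at this
    exact (le_abs_self _).trans_lt this
  -- a unit vector and a dual functional
  obtain ⟨v₀, hv₀⟩ := exists_ne (0 : E)
  set v : E := ‖v₀‖⁻¹ • v₀ with hvdef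
  have hv : ‖v‖ = 1 := by
    rw [hvdef, norm_smul, norm_inv, norm_norm]
    exact inv_mul_cancel₀ (norm_ne_zero_iff.2 hv₀)
  have hvne : v ≠ 0 := by
    intro h
    rw [h, norm_zero] at hv
    norm_num at hv
  obtain ⟨φ, hφ1, hφv⟩ := exists_dual_vector ℝ v (norm_ne_zero_iff.2 hvne)
  have hφv1 : φ v = 1 := by rw [hφv, hv]; norm_num
  have hφle : ∀ u : E, |φ u| ≤ ‖u‖ := by
    intro u
    calc |φ u| = ‖φ u‖ := (Real.norm_eq_abs _).symm
      _ ≤ ‖φ‖ * ‖u‖ := φ.le_opNorm u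
      _ = ‖u‖ := by rw [hφ1, one_mul]
  -- maximal separated set
  obtain ⟨S, hSsep, hSdense⟩ := NSA.exists_sep (E := E)
  have hSne : S.Nonempty := by
    obtain ⟨s, hs, _⟩ := hSdense 0
    exact ⟨s, hs⟩
  have hSinf : S.Infinite := by
    intro hfin
    have hFne : hfin.toFinset.Nonempty := by
      obtain ⟨s, hs⟩ := hSne
      exact ⟨s, hfin.mem_toFinset.2 hs⟩
    set B := hfin.toFinset.sup' hFne (fun s => ‖s‖) with hBdef
    have hB : ∀ s ∈ S, ‖s‖ ≤ B := fun s hs =>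
      Finset.le_sup' (f := fun s => ‖s‖) (hfin.mem_toFinset.2 hs)
    have hB0 : 0 ≤ B := (norm_nonneg _).trans (hB _ hSne.choose_spec)
    obtain ⟨s, hs, hxs⟩ := hSdense ((B + 2) • v)
    have hx : ‖(B + 2) • v‖ = B + 2 := by
      rw [norm_smul, hv, mul_one, Real.norm_eq_abs, abs_of_nonneg (by linarith)]
    have h1 : ‖(B + 2) • v‖ ≤ ‖s‖ + ‖(B + 2) • v - s‖ := by
      have := norm_add_le s ((B + 2) • v - s)
      simpa using this
    have h2 := hB s hs
    rw [hx] at h1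
    linarith
  -- the countable-scales dense set
  set D : Set E := {d | ∃ s ∈ S, ∃ m : ℕ, d = ((m:ℝ)+1)⁻¹ • s} with hDdef
  have hDdense : ∀ x : E, ∀ δ : ℝ, 0 < δ → ∃ d ∈ D, ‖x - d‖ < δ := by
    intro x δ hδ
    obtain ⟨m, hm⟩ := exists_nat_one_div_lt hδ
    obtain ⟨s, hs, hxs⟩ := hSdense (((m:ℝ)+1) • x)
    refine ⟨((m:ℝ)+1)⁻¹ • s, ⟨s, hs, m, rfl⟩, ?_⟩
    have hm0 : ((m:ℝ)+1) ≠ 0 := by positivity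
    have heq : x - ((m:ℝ)+1)⁻¹ • s = ((m:ℝ)+1)⁻¹ • (((m:ℝ)+1) • x - s) := by
      rw [smul_sub, inv_smul_smul₀ hm0]
    rw [heq, norm_smul, norm_inv, Real.norm_eq_abs, abs_of_pos (by positivity)]
    have h1 : ((m:ℝ)+1)⁻¹ * ‖((m:ℝ)+1) • x - s‖ < ((m:ℝ)+1)⁻¹ * 1 := by
      apply mul_lt_mul_of_pos_left hxs (by positivity)
    rw [mul_one] at h1
    refine h1.trans_le ?_
    rw [one_div] at hm
    exact hm.le
  have hDne : D.Nonempty := ⟨_, ⟨hSne.choose, hSne.choose_spec, 0, rfl⟩⟩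
  -- embedding of patterns into S
  have hfsurj : Function.Surjective
      (fun p : ↥S × ℕ => (⟨((p.2:ℝ)+1)⁻¹ • (p.1:E), ⟨p.1, p.1.2, p.2, rfl⟩⟩ : ↥D)) := by
    rintro ⟨d, s, hs, m, rfl⟩
    exact ⟨⟨⟨s, hs⟩, m⟩, rfl⟩
  obtain ⟨j⟩ := NSA.embed_lemma S D hSinf hDne _ hfsurj
  -- levels and centers
  set eNZ : ℕ × ℤ ≃ ℕ := Denumerable.eqv (ℕ × ℤ) with heNZ
  set Ncl : Finset (↥D × ℚ) → ℕ := fun P => ⌈NSA.Rad P⌉₊ + 2 with hNcl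
  set w : ℕ → ℝ := fun i => 4 * (((eNZ.symm i).1 : ℝ) + 4) with hwdef
  have hw : ∀ i, 0 ≤ w i := by
    intro i
    rw [hwdef]
    positivity
  set fib : ↥S → ℤ := fun s => ⌊8 * φ (s : E)⌋ with hfib
  set lev : Finset (↥D × ℚ) → ℕ := fun P => eNZ (Ncl P, fib (j P)) with hlevdef
  set ctr : Finset (↥D × ℚ) → E := fun P =>
    (4 * (Ncl P : ℝ) + 4) • ((j P : E) - φ (j P : E) • v) + (NSA.Hh w (lev P)) • v with hctrdef
  have hπ0 : ∀ x : E, φ (x - φ x • v) = 0 := by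
    intro x
    rw [map_sub, map_smul, smul_eq_mul, hφv1, mul_one, sub_self]
  have hφctr : ∀ P, φ (ctr P) = NSA.Hh w (lev P) := by
    intro P
    rw [hctrdef]
    simp only [map_add, map_smul, hπ0, smul_eq_mul, mul_zero, zero_add, hφv1, mul_one]
  have hRadN : ∀ P : Finset (↥D × ℚ), NSA.Rad P + 2 ≤ (Ncl P : ℝ) := by
    intro P
    rw [hNcl]
    push_cast
    have := Nat.le_ceil (NSA.Rad (E := E) P)
    linarith
  have hRad1 : ∀ P : Finset (↥D × ℚ), 1 ≤ NSA.Rad P := fun P => NSA.one_le_Rad P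
  have hw_lev : ∀ P, w (lev P) = 4 * ((Ncl P : ℝ) + 4) := by
    intro P
    rw [hlevdef, hwdef]
    simp only [Equiv.symm_apply_apply]
  -- the separation property
  have hsep : ∀ P Q : Finset (↥D × ℚ), P ≠ Q →
      NSA.Rad P + NSA.Rad Q + 3 ≤ ‖ctr P - ctr Q‖ := by
    intro P Q hPQ
    have hNP := hRadN P
    have hNQ := hRadN Q
    have hRP := hRad1 P
    have hRQ := hRad1 Q
    rcases eq_or_ne (Ncl P, fib (j P)) (Ncl Q, fib (j Q)) with heq | hne
    · -- same level: separation inside the fiber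
      have hN : Ncl P = Ncl Q := congrArg Prod.fst heq
      have hf : fib (j P) = fib (j Q) := congrArg Prod.snd heq
      have hlev : lev P = lev Q := by rw [hlevdef]; simp only; rw [heq]
      have hjne : (j P : E) ≠ (j Q : E) := by
        intro h
        exact hPQ (j.injective (Subtype.ext h))
      have hsep1 : 1 ≤ ‖(j P : E) - (j Q : E)‖ :=
        hSsep _ (j P).2 _ (j Q).2 hjne
      have hφ8 : |φ (j P : E) - φ (j Q : E)| < 1/8 := by
        have h1 : |8 * φ (j P : E) - 8 * φ (j Q : E)| < 1 :=
          Int.abs_sub_lt_one_of_floor_eq_floor hf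
        have h2 : 8 * φ (j P : E) - 8 * φ (j Q : E) = 8 * (φ (j P : E) - φ (j Q : E)) := by ring
        rw [h2, abs_mul] at h1
        rw [abs_of_nonneg (by norm_num : (0:ℝ) ≤ 8)] at h1
        linarith [abs_nonneg (φ (j P : E) - φ (j Q : E))]
      have hcd : ctr P - ctr Q = (4 * (Ncl P : ℝ) + 4) •
          (((j P : E) - φ (j P : E) • v) - ((j Q : E) - φ (j Q : E) • v)) := by
        rw [hctrdef]
        simp only
        rw [← hN, ← hlev]
        module
      have hdiff : ((j P : E) - φ (j P : E) • v) - ((j Q : E) - φ (j Q : E) • v) =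
          ((j P : E) - (j Q : E)) - (φ (j P : E) - φ (j Q : E)) • v := by
        module
      have hdn : (7:ℝ)/8 ≤ ‖((j P : E) - φ (j P : E) • v) - ((j Q : E) - φ (j Q : E) • v)‖ := by
        rw [hdiff]
        have h1 := norm_sub_norm_le ((j P : E) - (j Q : E)) ((φ (j P : E) - φ (j Q : E)) • v)
        have h2 : ‖(φ (j P : E) - φ (j Q : E)) • v‖ = |φ (j P : E) - φ (j Q : E)| := by
          rw [norm_smul, hv, mul_one, Real.norm_eq_abs]
        rw [h2] at h1
        linarith
      have hN2 : (2:ℝ) ≤ (Ncl P : ℝ) := by linarith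
      rw [hcd, norm_smul, Real.norm_eq_abs, abs_of_pos (by positivity)]
      have hc0 : (0:ℝ) ≤ 4 * (Ncl P : ℝ) + 4 := by positivity
      have h3 : (4 * (Ncl P : ℝ) + 4) * (7/8) ≤ (4 * (Ncl P : ℝ) + 4) *
          ‖((j P : E) - φ (j P : E) • v) - ((j Q : E) - φ (j Q : E) • v)‖ :=
        mul_le_mul_of_nonneg_left hdn hc0
      have hNQP : (Ncl Q : ℝ) = (Ncl P : ℝ) := by rw [hN]
      rw [hNQP] at hNQ
      linarith
    · -- different levels: separation via the functional
      have hlev_ne : lev P ≠ lev Q := by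
        rw [hlevdef]
        simp only
        exact fun h => hne (eNZ.injective h)
      have hgap : w (lev P) + w (lev Q) ≤ |NSA.Hh w (lev P) - NSA.Hh w (lev Q)| := by
        rcases lt_or_gt_of_ne hlev_ne with h | h
        · have := NSA.Hh_gap w hw h
          rw [abs_sub_comm]
          exact this.trans (le_abs_self _)
        · have := NSA.Hh_gap w hw h
          rw [add_comm]
          exact this.trans (le_abs_self _)
      have hφd : |φ (ctr P - ctr Q)| = |NSA.Hh w (lev P) - NSA.Hh w (lev Q)| := by
        rw [map_sub, hφctr, hφctr]
      have h1 := hφle (ctr P - ctr Q)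
      rw [hφd] at h1
      have h2 := hw_lev P
      have h3 := hw_lev Q
      rw [h2, h3] at hgap
      linarith
  -- assemble
  refine ⟨NSA.FF ρ ctr, ⟨1, fun x => ?_⟩, ?_, ?_⟩
  · rw [abs_le]
    exact ⟨by linarith [NSA.FF_nonneg ρ ctr x], NSA.FF_le_one ρ ctr x⟩
  · -- uniform continuity
    rw [Metric.uniformContinuous_iff]
    intro ε hε
    obtain ⟨δ₁, hδ₁, hδ⟩ := hρc (ε/3) (by positivity)
    refine ⟨min δ₁ (ε/3), lt_min hδ₁ (by positivity), ?_⟩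
    intro a b hab
    rw [dist_eq_norm] at hab
    have hab1 : ‖a - b‖ < δ₁ := hab.trans_le (min_le_left _ _)
    have hab2 : ‖a - b‖ < ε/3 := hab.trans_le (min_le_right _ _)
    have hρab : ρ (a - b) < ε/3 := hδ _ hab1
    have h1 := NSA.FF_le ρ ctr hρ0 hρd a b
    have h2 := NSA.FF_le ρ ctr hρ0 hρd b a
    have h3 : ρ (b - a) = ρ (a - b) := by rw [← neg_sub a b, hρsymm]
    have h4 : ‖b - a‖ = ‖a - b‖ := norm_sub_rev _ _
    rw [h3, h4] at h2
    rw [Real.dist_eq, abs_lt]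
    constructor <;> linarith
  · -- the orbit closure contains BLip
    intro g hg
    obtain ⟨hg1, hg2⟩ := hg
    have hg2' : ∀ x z : E, |g x - g z| ≤ ρ (x - z) := by
      intro x z
      have := hg2 x z
      rwa [hρeq] at this
    rw [mem_closure_iff_nhds]
    intro t ht
    rw [nhds_pi] at ht
    obtain ⟨I, hIfin, wI, hwI, hsub⟩ := Filter.mem_pi.1 ht
    have hwball : ∀ i : E, ∃ ε > 0, Metric.ball (g i) ε ⊆ wI i := fun i =>
      Metric.mem_nhds_iff.1 (hwI i)
    choose εi hεi hball using hwball
    set F := hIfin.toFinset with hFdef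
    rcases F.eq_empty_or_nonempty with hFe | hFne
    · have hIe : I = ∅ := by
        rwa [hFdef, Set.Finite.toFinset_eq_empty] at hFe
      refine ⟨fun z => NSA.FF ρ ctr (z + 0), ?_, ⟨0, rfl⟩⟩
      apply hsub
      intro i hi
      rw [hIe] at hi
      exact absurd hi (Set.notMem_empty i)
    · set εm := F.inf' hFne εi with hεmdef
      have hεm : 0 < εm := by
        rw [hεmdef, Finset.lt_inf'_iff]
        intro b hb
        exact hεi b
      obtain ⟨δ₁, hδ₁, hδc⟩ := hρc (εm/4) (by positivity)
      obtain ⟨P, hP⟩ := NSA.approx ρ ctr hρ0 hDdense g hg1 hg2' F hεm hδ₁ hδc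
      refine ⟨fun z => NSA.FF ρ ctr (z + ctr P), ?_, ⟨ctr P, rfl⟩⟩
      apply hsub
      intro i hi
      have hiF : i ∈ F := hIfin.mem_toFinset.2 hi
      obtain ⟨hnorm, happ⟩ := hP i hiF
      have heqb : NSA.FF ρ ctr (i + ctr P) = NSA.blk ρ ctr P (i + ctr P) := by
        apply NSA.FF_eq_blk ρ ctr hsep
        rw [add_sub_cancel_right]
        linarith
      apply hball i
      rw [Metric.mem_ball, Real.dist_eq]
      simp only
      rw [heqb]
      exact happ.trans_le (Finset.inf'_le _ hiF)
end
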